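/- arXiv:2206.07021 — 3 statements merged into one kernel-verified Lean document; each statement's English description precedes it below -/
import Mathlib

section
/- Inner-product bound for Q-RR without strongly convex summands: Suppose Q is a compression operator with parameter ω > 0, f is μ-strongly convex, each f_m^i is convex and L_max-smooth, and for every collection π of permutations of {1,…,n} and every i the function f^{π,i}(x) = (1/M)Σ_{m=1}^M f_m^{π_m(i)}(x) is L̃-smooth. Then in one epoch of Q-RR with τ = γn and g_t = (1/(Mn))Σ_{i=0}^{n−1}Σ_{m=1}^M Q(∇f_m^{π_m(i)}(x_t^i)), it holds that −2τ E[⟨g_t, x_t − x*⟩] ≤ −(τμ/2)‖x_t − x*‖² − τ(f(x_t) − f(x*)) + (τL̃/n)Σ_{i=0}^{n−1} E[‖x_t^i − x_t‖²], where the expectation is over the compression randomness within the epoch (conditional on x_t and the permutations). -/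
open MeasureTheory ProbabilityTheory Finset

/-- Bregman divergence `D_h(x, y) = h(x) − h(y) − ⟨∇h(y), x − y⟩` of a function `h`
with gradient field `h'`. -/
noncomputable def breg {d : ℕ} (h : EuclideanSpace ℝ (Fin d) → ℝ)
    (h' : EuclideanSpace ℝ (Fin d) → EuclideanSpace ℝ (Fin d))
    (x y : EuclideanSpace ℝ (Fin d)) : ℝ :=
  h x - h y - (inner ℝ (h' y) (x - y) : ℝ)

section Analytic

variable {E : Type*} [NormedAddCommGroup E] [InnerProductSpace ℝ E] [CompleteSpace E]

lemma hasDerivAt_line {h : E → ℝ} {h' : E → E}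
    (hgrad : ∀ x, HasGradientAt h (h' x) x) (x v : E) (t : ℝ) :
    HasDerivAt (fun s : ℝ => h (x + s • v)) (inner ℝ (h' (x + t • v)) v : ℝ) t := by
  have hc : HasDerivAt (fun s : ℝ => x + s • v) v t := by
    simpa using ((hasDerivAt_id t).smul_const v).const_add x
  have hf := (hgrad (x + t • v)).hasFDerivAt
  have := hf.comp_hasDerivAt t hc
  simp [InnerProductSpace.toDual] at this
  exact this

lemma convex_grad_ineq {h : E → ℝ} {h' : E → E}
    (hgrad : ∀ x, HasGradientAt h (h' x) x) (hconv : ConvexOn ℝ Set.univ h)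
    (x y : E) : h x + (inner ℝ (h' x) (y - x) : ℝ) ≤ h y := by
  set φ : ℝ → ℝ := fun t => h (x + t • (y - x)) with hφ
  have hφconv : ConvexOn ℝ Set.univ φ := by
    have h1 := (hconv.comp_affineMap (AffineMap.lineMap x y : ℝ →ᵃ[ℝ] E)).subset
      (Set.subset_univ _) convex_univ
    have h2 : (h ∘ (AffineMap.lineMap x y : ℝ →ᵃ[ℝ] E)) = φ := by
      funext t
      simp only [Function.comp, φ, AffineMap.lineMap_apply_module]
      congr 1
      module
    rwa [h2] at h1
  have hd : HasDerivAt φ (inner ℝ (h' x) (y - x) : ℝ) 0 := by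
    have := hasDerivAt_line hgrad x (y - x) 0
    simpa using this
  have := hφconv.le_slope_of_hasDerivAt (Set.mem_univ (0:ℝ)) (Set.mem_univ (1:ℝ))
    one_pos hd
  have hs : slope φ 0 1 = h y - h x := by
    simp [slope_def_field, φ]
  rw [hs] at this
  linarith

lemma descent_lemma {h : E → ℝ} {h' : E → E}
    (hgrad : ∀ x, HasGradientAt h (h' x) x) {L : ℝ}
    (hL : ∀ x y, ‖h' x - h' y‖ ≤ L * ‖x - y‖) (x y : E) :
    h y ≤ h x + (inner ℝ (h' x) (y - x) : ℝ) + L / 2 * ‖y - x‖ ^ 2 := by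
  set v := y - x with hv
  set ψ : ℝ → ℝ := fun t =>
    h (x + t • v) - t * (inner ℝ (h' x) v : ℝ) - L * t ^ 2 / 2 * ‖v‖ ^ 2 with hψ
  have hdψ : ∀ t, HasDerivAt ψ
      ((inner ℝ (h' (x + t • v)) v : ℝ) - (inner ℝ (h' x) v : ℝ) - L * t * ‖v‖ ^ 2) t := by
    intro t
    have h1 := hasDerivAt_line hgrad x v t
    have h2 : HasDerivAt (fun t : ℝ => t * (inner ℝ (h' x) v : ℝ))
        (inner ℝ (h' x) v : ℝ) t := by simpa using (hasDerivAt_id t).mul_const _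
    have h3 : HasDerivAt (fun t : ℝ => L * t ^ 2 / 2 * ‖v‖ ^ 2)
        (L * t * ‖v‖ ^ 2) t := by
      have := ((hasDerivAt_pow 2 t).const_mul L).div_const 2
      have := this.mul_const (‖v‖ ^ 2)
      exact this.congr_deriv (by rw [show (2:ℕ) - 1 = 1 from rfl]; push_cast; ring)
    exact (h1.sub h2).sub h3
  have hanti : AntitoneOn ψ (Set.Icc 0 1) := by
    apply antitoneOn_of_deriv_nonpos (convex_Icc 0 1)
    · exact fun t _ => ((hdψ t).continuousAt).continuousWithinAt
    · exact fun t _ => ((hdψ t).differentiableAt).differentiableWithinAt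
    · intro t ht
      rw [interior_Icc] at ht
      rw [(hdψ t).deriv]
      have hb : (inner ℝ (h' (x + t • v)) v : ℝ) - (inner ℝ (h' x) v : ℝ)
          ≤ L * t * ‖v‖ ^ 2 := by
        have h4 : (inner ℝ (h' (x + t • v)) v : ℝ) - (inner ℝ (h' x) v : ℝ)
            = (inner ℝ (h' (x + t • v) - h' x) v : ℝ) := by
          rw [inner_sub_left]
        rw [h4]
        calc (inner ℝ (h' (x + t • v) - h' x) v : ℝ)
            ≤ ‖h' (x + t • v) - h' x‖ * ‖v‖ := real_inner_le_norm _ _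
          _ ≤ (L * ‖x + t • v - x‖) * ‖v‖ := by
              apply mul_le_mul_of_nonneg_right (hL _ _) (norm_nonneg _)
          _ = L * t * ‖v‖ ^ 2 := by
              rw [add_sub_cancel_left, norm_smul, Real.norm_eq_abs,
                abs_of_pos ht.1]; ring
      linarith
  have := hanti (Set.left_mem_Icc.2 zero_le_one) (Set.right_mem_Icc.2 zero_le_one)
    zero_le_one
  simp only [ψ] at this
  simp only [zero_smul, add_zero, zero_mul, one_smul, one_pow, mul_one] at this
  have hxy : x + v = y := by rw [hv]; abel
  rw [hxy] at this
  linarith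

lemma strong_min {f : E → ℝ} {μ : ℝ} (hμ : 0 < μ)
    (hsc : StrongConvexOn Set.univ μ f) {xstar : E} (hmin : ∀ y, f xstar ≤ f y)
    (x : E) : μ / 2 * ‖x - xstar‖ ^ 2 ≤ f x - f xstar := by
  have key : ∀ t : ℝ, 0 < t → t < 1 → t * (μ / 2 * ‖x - xstar‖ ^ 2) ≤ f x - f xstar := by
    intro t ht0 ht1
    have h2 := hsc.2 (Set.mem_univ xstar) (Set.mem_univ x) ht0.le
      (by linarith : (0:ℝ) ≤ 1 - t) (by ring)
    have h3 := hmin (t • xstar + (1 - t) • x)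
    have h4 : ‖xstar - x‖ = ‖x - xstar‖ := norm_sub_rev _ _
    rw [h4] at h2
    simp only [smul_eq_mul] at h2
    have h5 : (1 - t) * f xstar ≤ (1 - t) * f x - t * (1 - t) * (μ / 2 * ‖x - xstar‖ ^ 2) := by
      nlinarith [h2, h3]
    have h6 : 0 < 1 - t := by linarith
    nlinarith [h5, h6]
  have hlim : Filter.Tendsto (fun t : ℝ => t * (μ / 2 * ‖x - xstar‖ ^ 2))
      (nhdsWithin 1 (Set.Iio 1)) (nhds (μ / 2 * ‖x - xstar‖ ^ 2)) := by
    have hc : Continuous (fun t : ℝ => t * (μ / 2 * ‖x - xstar‖ ^ 2)) :=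
      continuous_id.mul continuous_const
    have := hc.tendsto (1 : ℝ)
    simp only [one_mul] at this
    exact this.mono_left nhdsWithin_le_nhds
  refine le_of_tendsto hlim ?_
  filter_upwards [Ioo_mem_nhdsLT_of_mem (by constructor <;> norm_num : (1:ℝ) ∈ Set.Ioc 0 1)]
    with t ht
  exact key t ht.1 ht.2

lemma hasGradientAt_const_mul_sum {ι : Type*} (s : Finset ι) (f : ι → E → ℝ) (f' : ι → E)
    (a : ℝ) (x : E) (h : ∀ i ∈ s, HasGradientAt (f i) (f' i) x) :
    HasGradientAt (fun y => a * ∑ i ∈ s, f i y) (a • ∑ i ∈ s, f' i) x := by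
  rw [hasGradientAt_iff_hasFDerivAt]
  have hsum := HasFDerivAt.sum (fun i (hi : i ∈ s) => (h i hi).hasFDerivAt)
  have hmul := hsum.const_mul a
  have e : (fun y => a * ∑ i ∈ s, f i y) = fun y => a * (∑ i ∈ s, f i) y := by
    simp [Finset.sum_apply]
  rw [e]
  refine hmul.congr_fderiv ?_
  ext v
  simp [InnerProductSpace.toDual_apply_apply, sum_inner, real_inner_smul_left, smul_eq_mul,
    Finset.mul_sum]

end Analytic

section Prob

variable {d : ℕ} {Ω₀ Ω : Type*} [MeasurableSpace Ω₀] [MeasurableSpace Ω]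
  {ν : Measure Ω₀} [IsProbabilityMeasure ν] {P : Measure Ω} [IsProbabilityMeasure P]
  {Q : EuclideanSpace ℝ (Fin d) → Ω₀ → EuclideanSpace ℝ (Fin d)}
  {omg : ℝ}

lemma q_sq_integrable (hQmem : ∀ x, MemLp (Q x) 2 ν) (v : EuclideanSpace ℝ (Fin d)) :
    Integrable (fun o => ‖Q v o‖ ^ 2) ν :=
  (memLp_two_iff_integrable_sq_norm (hQmem v).1).1 (hQmem v)

lemma q_sq_bound (hQmem : ∀ x, MemLp (Q x) 2 ν)
    (hQvar : ∀ x, ∫ o, ‖Q x o - x‖ ^ 2 ∂ν ≤ omg * ‖x‖ ^ 2)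
    (v : EuclideanSpace ℝ (Fin d)) :
    ∫ o, ‖Q v o‖ ^ 2 ∂ν ≤ (2 * omg + 2) * ‖v‖ ^ 2 := by
  have hint : Integrable (fun o => ‖Q v o‖ ^ 2) ν := q_sq_integrable hQmem v
  have hint2 : Integrable (fun o => ‖Q v o - v‖ ^ 2) ν := by
    have := (hQmem v).sub (memLp_const (μ := ν) v)
    exact (memLp_two_iff_integrable_sq_norm this.1).1 this
  have hpt : ∀ o, ‖Q v o‖ ^ 2 ≤ 2 * ‖Q v o - v‖ ^ 2 + 2 * ‖v‖ ^ 2 := by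
    intro o
    have h1 : ‖Q v o‖ ≤ ‖Q v o - v‖ + ‖v‖ := by
      simpa using norm_add_le (Q v o - v) v
    nlinarith [norm_nonneg (Q v o), norm_nonneg (Q v o - v), norm_nonneg v,
      sq_nonneg (‖Q v o - v‖ - ‖v‖)]
  calc ∫ o, ‖Q v o‖ ^ 2 ∂ν ≤ ∫ o, (2 * ‖Q v o - v‖ ^ 2 + 2 * ‖v‖ ^ 2) ∂ν := by
        apply integral_mono hint ((hint2.const_mul 2).add (integrable_const _))
        intro o; exact hpt o
    _ = 2 * ∫ o, ‖Q v o - v‖ ^ 2 ∂ν + 2 * ‖v‖ ^ 2 := by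
        rw [integral_add (hint2.const_mul 2) (integrable_const _),
          integral_const_mul, integral_const]
        simp
    _ ≤ 2 * (omg * ‖v‖ ^ 2) + 2 * ‖v‖ ^ 2 := by
        have := hQvar v; nlinarith []
    _ = (2 * omg + 2) * ‖v‖ ^ 2 := by ring

variable {X : Ω → EuclideanSpace ℝ (Fin d)} {Y : Ω → Ω₀}
  {G : EuclideanSpace ℝ (Fin d) → EuclideanSpace ℝ (Fin d)}

lemma pair_law (hX : Measurable X) (hY : Measurable Y) (hind : IndepFun X Y P)
    (hlaw : Measure.map Y P = ν) :
    Measure.map (fun w => (X w, Y w)) P = (Measure.map X P).prod ν := by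
  rw [← hlaw]
  exact (indepFun_iff_map_prod_eq_prod_map_map hX.aemeasurable hY.aemeasurable).1 hind

lemma comp_memLp (hQmeas : Measurable (Function.uncurry Q))
    (hQmem : ∀ x, MemLp (Q x) 2 ν)
    (hQvar : ∀ x, ∫ o, ‖Q x o - x‖ ^ 2 ∂ν ≤ omg * ‖x‖ ^ 2)
    (hX : Measurable X) (hY : Measurable Y) (hind : IndepFun X Y P)
    (hlaw : Measure.map Y P = ν) (hG : Measurable G)
    (hGX : MemLp (fun w => G (X w)) 2 P) :
    MemLp (fun w => Q (G (X w)) (Y w)) 2 P := by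
  have hpairmeas : Measurable (fun w => (X w, Y w)) := hX.prodMk hY
  have hpair : Measure.map (fun w => (X w, Y w)) P = (Measure.map X P).prod ν :=
    pair_law hX hY hind hlaw
  set F : EuclideanSpace ℝ (Fin d) × Ω₀ → ℝ := fun p => ‖Q (G p.1) p.2‖ ^ 2 with hF
  have hFmeas : Measurable F := by
    apply Measurable.pow_const
    exact (hQmeas.comp ((hG.comp measurable_fst).prodMk measurable_snd)).norm
  have hZmeas : Measurable (fun w => Q (G (X w)) (Y w)) :=
    hQmeas.comp ((hG.comp hX).prodMk hY)
  rw [memLp_two_iff_integrable_sq_norm hZmeas.aestronglyMeasurable]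
  have hcomp : (fun w => ‖Q (G (X w)) (Y w)‖ ^ 2) = F ∘ (fun w => (X w, Y w)) := rfl
  rw [hcomp, ← integrable_map_measure hFmeas.aestronglyMeasurable hpairmeas.aemeasurable,
    hpair]
  rw [MeasureTheory.integrable_prod_iff
    (hFmeas.aestronglyMeasurable : AEStronglyMeasurable F _)]
  constructor
  · exact Filter.Eventually.of_forall fun x => q_sq_integrable hQmem (G x)
  · have hGXint : Integrable (fun x => ‖G x‖ ^ 2) (Measure.map X P) := by
      rw [integrable_map_measure ((hG.norm.pow_const 2).aestronglyMeasurable) hX.aemeasurable]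
      exact (memLp_two_iff_integrable_sq_norm ((hG.comp hX).aestronglyMeasurable)).1 hGX
    apply Integrable.mono (hGXint.const_mul (2 * omg + 2))
    · exact (hFmeas.aestronglyMeasurable.norm.integral_prod_right')
    · apply Filter.Eventually.of_forall
      intro x
      have h1 : ∀ o, ‖F (x, o)‖ = F (x, o) := fun o => Real.norm_of_nonneg (by positivity)
      have h2 : ∫ o, ‖F (x, o)‖ ∂ν = ∫ o, F (x, o) ∂ν := by simp_rw [h1]
      rw [Real.norm_eq_abs, h2, abs_of_nonneg (integral_nonneg fun o => by positivity)]
      calc ∫ o, F (x, o) ∂ν ≤ (2 * omg + 2) * ‖G x‖ ^ 2 := q_sq_bound hQmem hQvar (G x)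
        _ ≤ ‖(2 * omg + 2) * ‖G x‖ ^ 2‖ := le_abs_self _

lemma comp_mean (hQmeas : Measurable (Function.uncurry Q))
    (hQmem : ∀ x, MemLp (Q x) 2 ν)
    (hQvar : ∀ x, ∫ o, ‖Q x o - x‖ ^ 2 ∂ν ≤ omg * ‖x‖ ^ 2)
    (hQmean : ∀ x, ∫ o, Q x o ∂ν = x) (homg : 0 ≤ omg)
    (hX : Measurable X) (hY : Measurable Y) (hind : IndepFun X Y P)
    (hlaw : Measure.map Y P = ν) (hG : Measurable G)
    (hGX : MemLp (fun w => G (X w)) 2 P) (c : EuclideanSpace ℝ (Fin d)) :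
    ∫ w, (inner ℝ (Q (G (X w)) (Y w)) c : ℝ) ∂P = ∫ w, (inner ℝ (G (X w)) c : ℝ) ∂P := by
  have hpairmeas : Measurable (fun w => (X w, Y w)) := hX.prodMk hY
  have hpair : Measure.map (fun w => (X w, Y w)) P = (Measure.map X P).prod ν :=
    pair_law hX hY hind hlaw
  set F : EuclideanSpace ℝ (Fin d) × Ω₀ → ℝ := fun p => (inner ℝ (Q (G p.1) p.2) c : ℝ) with hF
  have hFmeas : Measurable F :=
    (hQmeas.comp ((hG.comp measurable_fst).prodMk measurable_snd)).inner measurable_const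
  have hGXint : Integrable (fun x => ‖G x‖ ^ 2) (Measure.map X P) := by
    rw [integrable_map_measure ((hG.norm.pow_const 2).aestronglyMeasurable) hX.aemeasurable]
    exact (memLp_two_iff_integrable_sq_norm ((hG.comp hX).aestronglyMeasurable)).1 hGX
  have hint : Integrable F ((Measure.map X P).prod ν) := by
    rw [MeasureTheory.integrable_prod_iff hFmeas.aestronglyMeasurable]
    constructor
    · exact Filter.Eventually.of_forall fun x =>
        ((hQmem (G x)).integrable one_le_two).inner_const c
    · apply Integrable.mono
        (((integrable_const (1:ℝ)).add (hGXint.const_mul (2 * omg + 2))).const_mul ‖c‖)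
      · exact hFmeas.aestronglyMeasurable.norm.integral_prod_right'
      · apply Filter.Eventually.of_forall
        intro x
        have hsq : Integrable (fun o => ‖Q (G x) o‖ ^ 2) ν := q_sq_integrable hQmem (G x)
        have hFint : Integrable (fun o => ‖F (x, o)‖) ν :=
          (((hQmem (G x)).integrable one_le_two).inner_const c).norm
        have hpt : ∀ o, ‖F (x, o)‖ ≤ ‖c‖ * (1 + ‖Q (G x) o‖ ^ 2) := by
          intro o
          have h1 : ‖F (x, o)‖ ≤ ‖Q (G x) o‖ * ‖c‖ := by
            simpa [F, Real.norm_eq_abs] using abs_real_inner_le_norm (Q (G x) o) c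
          nlinarith [norm_nonneg (Q (G x) o), norm_nonneg c, sq_nonneg (‖Q (G x) o‖ - 1),
            mul_nonneg (norm_nonneg c) (sq_nonneg (‖Q (G x) o‖ - 1))]
        have hb1 : ∫ o, ‖F (x, o)‖ ∂ν ≤ ‖c‖ * (1 + ∫ o, ‖Q (G x) o‖ ^ 2 ∂ν) := by
          calc ∫ o, ‖F (x, o)‖ ∂ν ≤ ∫ o, ‖c‖ * (1 + ‖Q (G x) o‖ ^ 2) ∂ν :=
                integral_mono hFint (((integrable_const 1).add hsq).const_mul ‖c‖) hpt
            _ = ‖c‖ * (1 + ∫ o, ‖Q (G x) o‖ ^ 2 ∂ν) := by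
                rw [integral_const_mul, integral_add (integrable_const 1) hsq, integral_const]
                simp
        have hb2 : ∫ o, ‖Q (G x) o‖ ^ 2 ∂ν ≤ (2 * omg + 2) * ‖G x‖ ^ 2 :=
          q_sq_bound hQmem hQvar (G x)
        have hnn : (0:ℝ) ≤ 2 * omg + 2 := by linarith
        rw [Real.norm_eq_abs, abs_of_nonneg (integral_nonneg fun o => norm_nonneg _)]
        have hrhs : ‖‖c‖ * (1 + (2 * omg + 2) * ‖G x‖ ^ 2)‖
            = ‖c‖ * (1 + (2 * omg + 2) * ‖G x‖ ^ 2) := by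
          apply Real.norm_of_nonneg; positivity
        simp only [Pi.add_apply]
        rw [hrhs]
        have : ‖c‖ * (1 + ∫ o, ‖Q (G x) o‖ ^ 2 ∂ν) ≤ ‖c‖ * (1 + (2 * omg + 2) * ‖G x‖ ^ 2) := by
          apply mul_le_mul_of_nonneg_left _ (norm_nonneg c); linarith
        linarith
  have h1 : ∫ p, F p ∂((Measure.map X P).prod ν) = ∫ w, F (X w, Y w) ∂P := by
    rw [← hpair]; exact integral_map hpairmeas.aemeasurable hFmeas.aestronglyMeasurable
  have h2 := MeasureTheory.integral_prod F hint
  have h3 : ∀ x, ∫ o, F (x, o) ∂ν = (inner ℝ (G x) c : ℝ) := by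
    intro x
    have hi := integral_inner (𝕜 := ℝ) ((hQmem (G x)).integrable one_le_two) c
    rw [hQmean (G x)] at hi
    calc ∫ o, F (x, o) ∂ν = ∫ o, (inner ℝ c (Q (G x) o) : ℝ) ∂ν :=
          integral_congr_ae (Filter.Eventually.of_forall fun o => real_inner_comm _ _)
      _ = (inner ℝ c (G x) : ℝ) := hi
      _ = (inner ℝ (G x) c : ℝ) := real_inner_comm _ _
  have h4 : ∫ x, (inner ℝ (G x) c : ℝ) ∂(Measure.map X P) = ∫ w, (inner ℝ (G (X w)) c : ℝ) ∂P :=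
    integral_map hX.aemeasurable ((hG.inner measurable_const).aestronglyMeasurable)
  calc ∫ w, (inner ℝ (Q (G (X w)) (Y w)) c : ℝ) ∂P = ∫ w, F (X w, Y w) ∂P := rfl
    _ = ∫ p, F p ∂((Measure.map X P).prod ν) := h1.symm
    _ = ∫ x, ∫ o, F (x, o) ∂ν ∂(Measure.map X P) := h2
    _ = ∫ x, (inner ℝ (G x) c : ℝ) ∂(Measure.map X P) := by
        apply integral_congr_ae; exact Filter.Eventually.of_forall fun x => h3 x
    _ = ∫ w, (inner ℝ (G (X w)) c : ℝ) ∂P := h4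

end Prob
set_option maxHeartbeats 1000000 in
/-- **inner-product bound for Q-RR without strongly convex summands.**
One epoch of Q-RR with `x_t = xt` and the permutations fixed; `τ = γn` and
`g_t = (1/(Mn)) Σ_{i,m} Q(∇f_m^{π_m(i)}(x_t^i))`; the expectation is over the
compression randomness within the epoch.  -/
theorem q_rr_inner_product_bound
    {d M n : ℕ} (hM : 0 < M) (hn : 0 < n)
    (f : Fin M → Fin n → EuclideanSpace ℝ (Fin d) → ℝ)
    (g : Fin M → Fin n → EuclideanSpace ℝ (Fin d) → EuclideanSpace ℝ (Fin d))
    (hgrad : ∀ m i x, HasGradientAt (f m i) (g m i x) x)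
    (hconv : ∀ m i, ConvexOn ℝ Set.univ (f m i))
    (Lmax : ℝ)
    (hsmooth : ∀ m i x y, ‖g m i x - g m i y‖ ≤ Lmax * ‖x - y‖)
    -- the averaged summands f^{π,i} = (1/M) Σ_m f_m^{π_m(i)} are L̃-smooth
    (Ltil : ℝ)
    (hLtil : ∀ (σs : Fin M → Equiv.Perm (Fin n)) (i : Fin n)
      (x y : EuclideanSpace ℝ (Fin d)),
      ‖(M : ℝ)⁻¹ • ∑ m, g m (σs m i) x - (M : ℝ)⁻¹ • ∑ m, g m (σs m i) y‖ ≤ Ltil * ‖x - y‖)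
    (omg : ℝ) (homg : 0 < omg)
    -- f = (1/(Mn)) Σ_m Σ_j f_m^j is μ-strongly convex with unique minimizer x*
    (μ : ℝ) (hμ : 0 < μ)
    (fbar : EuclideanSpace ℝ (Fin d) → ℝ)
    (hfbar : fbar = fun x => ((M : ℝ) * n)⁻¹ * ∑ m, ∑ j, f m j x)
    (hsc : StrongConvexOn Set.univ μ fbar)
    (xstar : EuclideanSpace ℝ (Fin d))
    (hmin : ∀ y, fbar xstar ≤ fbar y)
    (huniq : ∀ y, (∀ z, fbar y ≤ fbar z) → y = xstar)
    -- the compression operator: Q x (U w) is unbiased with relative variance omg,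
    -- where the seeds U i m are i.i.d. with law ν, independent across steps/workers
    {Ω₀ : Type*} [MeasurableSpace Ω₀] (ν : Measure Ω₀) [IsProbabilityMeasure ν]
    (Q : EuclideanSpace ℝ (Fin d) → Ω₀ → EuclideanSpace ℝ (Fin d))
    (hQmeas : Measurable (Function.uncurry Q))
    (hQmem : ∀ x, MemLp (Q x) 2 ν)
    (hQmean : ∀ x, ∫ o, Q x o ∂ν = x)
    (hQvar : ∀ x, ∫ o, ‖Q x o - x‖ ^ 2 ∂ν ≤ omg * ‖x‖ ^ 2)
    {Ω : Type*} [MeasurableSpace Ω] (P : Measure Ω) [IsProbabilityMeasure P]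
    (U : Fin n → Fin M → Ω → Ω₀)
    (hUmeas : ∀ i m, Measurable (U i m))
    (hUdist : ∀ i m, Measure.map (U i m) P = ν)
    (hUindep : iIndepFun (m := fun _ : Fin n × Fin M => (inferInstance : MeasurableSpace Ω₀))
      (fun p => U p.1 p.2) P)
    -- epoch t : current point `xt`, fixed permutations `π`
    (γ : ℝ) (hγ : 0 < γ) (τ : ℝ) (hτ : τ = γ * n)
    (xt : EuclideanSpace ℝ (Fin d)) (π : Fin M → Equiv.Perm (Fin n))
    (y : ℕ → Ω → EuclideanSpace ℝ (Fin d))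
    (hy0 : ∀ w, y 0 w = xt)
    (hystep : ∀ (i : Fin n) (w : Ω), y ((i : ℕ) + 1) w
      = y (i : ℕ) w - (γ / M) • ∑ m, Q (g m (π m i) (y (i : ℕ) w)) (U i m w))
    (gt : Ω → EuclideanSpace ℝ (Fin d))
    (hgt : ∀ w, gt w = ((M : ℝ) * n)⁻¹ •
      ∑ i : Fin n, ∑ m, Q (g m (π m i) (y (i : ℕ) w)) (U i m w))
    :
    -(2 * τ) * ∫ w, (inner ℝ (gt w) (xt - xstar) : ℝ) ∂P
      ≤ -(τ * μ / 2) * ‖xt - xstar‖ ^ 2 - τ * (fbar xt - fbar xstar)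
        + τ * Ltil / n * ∑ i : Fin n, ∫ w, ‖y (i : ℕ) w - xt‖ ^ 2 ∂P := by
  classical
  have hNn : (0:ℝ) < n := by exact_mod_cast hn
  have hMr : (0:ℝ) < M := by exact_mod_cast hM
  -- measurability of the gradients
  have hgmeas : ∀ m j, Measurable (g m j) := by
    intro m j
    have hl : LipschitzWith (Real.toNNReal (max Lmax 0)) (g m j) := by
      apply LipschitzWith.of_dist_le_mul
      intro a b
      rw [dist_eq_norm, dist_eq_norm]
      calc ‖g m j a - g m j b‖ ≤ Lmax * ‖a - b‖ := hsmooth m j a b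
        _ ≤ max Lmax 0 * ‖a - b‖ :=
            mul_le_mul_of_nonneg_right (le_max_left _ _) (norm_nonneg _)
        _ = (Real.toNNReal (max Lmax 0) : ℝ) * ‖a - b‖ := by
            rw [Real.coe_toNNReal _ (le_max_right _ _)]
    exact hl.continuous.measurable
  -- L² stability under Lipschitz-type maps
  have hlipmem : ∀ (G : EuclideanSpace ℝ (Fin d) → EuclideanSpace ℝ (Fin d)) (K : ℝ),
      (∀ a b, ‖G a - G b‖ ≤ K * ‖a - b‖) → Measurable G →
      ∀ (X : Ω → EuclideanSpace ℝ (Fin d)), Measurable X → MemLp X 2 P →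
      MemLp (fun w => G (X w)) 2 P := by
    intro G K hK hGm X hXm hX
    apply MemLp.of_le ((memLp_const (‖G 0‖)).add ((hX.norm).const_mul (max K 0)))
      ((hGm.comp hXm).aestronglyMeasurable)
    apply Filter.Eventually.of_forall
    intro w
    have h2 : ‖G (X w)‖ ≤ ‖G (X w) - G 0‖ + ‖G 0‖ := by
      simpa using norm_add_le (G (X w) - G 0) (G 0)
    have h3 : ‖G (X w) - G 0‖ ≤ K * ‖X w‖ := by simpa using hK (X w) 0
    have h4 : K * ‖X w‖ ≤ max K 0 * ‖X w‖ :=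
      mul_le_mul_of_nonneg_right (le_max_left _ _) (norm_nonneg _)
    have h5 : ‖G (X w)‖ ≤ ‖G 0‖ + max K 0 * ‖X w‖ := by linarith
    simp only [Pi.add_apply]
    rw [Real.norm_eq_abs]
    exact h5.trans (le_abs_self _)
  -- index sets of past randomness
  set S : ℕ → Finset (Fin n × Fin M) :=
    fun k => Finset.univ.filter (fun p => (p.1 : ℕ) < k) with hS
  -- independence from the representation
  have hindep_of_rep : ∀ (k : ℕ) (hk : k < n) (m : Fin M),
      (∃ Φ : ((↑(S k) : Type _) → Ω₀) → EuclideanSpace ℝ (Fin d), Measurable Φ ∧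
        ∀ w, y k w = Φ (fun q => U (q : Fin n × Fin M).1 (q : Fin n × Fin M).2 w)) →
      IndepFun (y k) (U ⟨k, hk⟩ m) P := by
    intro k hk m hrep
    obtain ⟨Φ, hΦm, hΦe⟩ := hrep
    have hnot : ((⟨k, hk⟩ : Fin n), m) ∉ S k := by simp [hS]
    have hdisj : Disjoint (S k) ({((⟨k, hk⟩ : Fin n), m)} : Finset _) :=
      Finset.disjoint_singleton_right.2 hnot
    have hbig := hUindep.indepFun_finset (S k) {((⟨k, hk⟩ : Fin n), m)} hdisj
      (fun p => hUmeas p.1 p.2)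
    have hcomp := hbig.comp hΦm (measurable_pi_apply
      (⟨((⟨k, hk⟩ : Fin n), m), Finset.mem_singleton_self _⟩ :
        (↑({((⟨k, hk⟩ : Fin n), m)} : Finset (Fin n × Fin M)) : Type _)))
    apply hcomp.congr
    · exact Filter.Eventually.of_forall fun w => (hΦe w).symm
    · exact Filter.Eventually.of_forall fun w => rfl
  -- main induction
  have main : ∀ k : ℕ, k ≤ n → Measurable (y k) ∧ MemLp (y k) 2 P ∧
      ∃ Φ : ((↑(S k) : Type _) → Ω₀) → EuclideanSpace ℝ (Fin d), Measurable Φ ∧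
        ∀ w, y k w = Φ (fun q => U (q : Fin n × Fin M).1 (q : Fin n × Fin M).2 w) := by
    intro k
    induction k with
    | zero =>
      intro _
      have h0 : y 0 = fun _ => xt := funext hy0
      refine ⟨by rw [h0]; exact measurable_const, by rw [h0]; exact memLp_const xt,
        ⟨fun _ => xt, measurable_const, fun w => hy0 w⟩⟩
    | succ i ih =>
      intro hik
      have hi : i < n := Nat.lt_of_succ_le hik
      obtain ⟨hym, hyL, Φ, hΦm, hΦe⟩ := ih (le_of_lt hi)
      set i' : Fin n := ⟨i, hi⟩ with hi'
      have hstep : y (i+1) = fun w =>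
          y i w - (γ / M) • ∑ m, Q (g m (π m i') (y i w)) (U i' m w) :=
        funext fun w => hystep i' w
      have hindep : ∀ m : Fin M, IndepFun (y i) (U i' m) P :=
        fun m => hindep_of_rep i hi m ⟨Φ, hΦm, hΦe⟩
      have hGX : ∀ m, MemLp (fun w => g m (π m i') (y i w)) 2 P :=
        fun m => hlipmem _ Lmax (hsmooth m (π m i')) (hgmeas m _) _ hym hyL
      have hZmeas : ∀ m, Measurable (fun w => Q (g m (π m i') (y i w)) (U i' m w)) :=
        fun m => hQmeas.comp (((hgmeas m (π m i')).comp hym).prodMk (hUmeas i' m))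
      have hZmem : ∀ m, MemLp (fun w => Q (g m (π m i') (y i w)) (U i' m w)) 2 P :=
        fun m => comp_memLp hQmeas hQmem hQvar hym (hUmeas i' m) (hindep m)
          (hUdist i' m) (hgmeas m _) (hGX m)
      have hsub : S i ⊆ S (i+1) := by
        intro p hp
        simp only [hS, Finset.mem_filter, Finset.mem_univ, true_and] at hp ⊢
        omega
      have hmemS : ∀ m : Fin M, (i', m) ∈ S (i+1) := by
        intro m; simp [hS, hi']
      refine ⟨?_, ?_, ?_⟩
      · rw [hstep]
        exact hym.sub ((Finset.measurable_sum _ (fun m _ => hZmeas m)).const_smul (γ / M))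
      · rw [hstep]
        have hsumLp : MemLp (fun w => ∑ m, Q (g m (π m i') (y i w)) (U i' m w)) 2 P :=
          memLp_finset_sum _ (fun m _ => hZmem m)
        exact hyL.sub (hsumLp.const_smul (γ / M))
      · have hres : Measurable
            (fun (v : (↑(S (i+1)) : Type _) → Ω₀) (q : (↑(S i) : Type _)) =>
              v ⟨q.1, hsub q.2⟩) :=
          measurable_pi_lambda _ (fun q => measurable_pi_apply _)
        refine ⟨fun v => Φ (fun q => v ⟨q.1, hsub q.2⟩) -
          (γ / M) • ∑ m, Q (g m (π m i') (Φ (fun q => v ⟨q.1, hsub q.2⟩)))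
            (v ⟨(i', m), hmemS m⟩), ?_, ?_⟩
        · exact (hΦm.comp hres).sub ((Finset.measurable_sum _ (fun m _ =>
            hQmeas.comp (((hgmeas m _).comp (hΦm.comp hres)).prodMk
              (measurable_pi_apply _)))).const_smul (γ / M))
        · intro w
          rw [hstep]
          simp only
          rw [← hΦe w]
  -- extract per-step facts
  set c := xt - xstar with hc
  have hym2 : ∀ i : Fin n, Measurable (y (i:ℕ)) := fun i => (main i (le_of_lt i.isLt)).1
  have hyL2 : ∀ i : Fin n, MemLp (y (i:ℕ)) 2 P := fun i => (main i (le_of_lt i.isLt)).2.1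
  have hind : ∀ (i : Fin n) (m : Fin M), IndepFun (y (i:ℕ)) (U i m) P := by
    intro i m
    exact hindep_of_rep i i.isLt m (main i (le_of_lt i.isLt)).2.2
  have hGX : ∀ (i : Fin n) (m : Fin M), MemLp (fun w => g m (π m i) (y (i:ℕ) w)) 2 P :=
    fun i m => hlipmem _ Lmax (hsmooth m (π m i)) (hgmeas m _) _ (hym2 i) (hyL2 i)
  have hmean : ∀ (i : Fin n) (m : Fin M),
      ∫ w, (inner ℝ (Q (g m (π m i) (y (i:ℕ) w)) (U i m w)) c : ℝ) ∂P
        = ∫ w, (inner ℝ (g m (π m i) (y (i:ℕ) w)) c : ℝ) ∂P :=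
    fun i m => comp_mean hQmeas hQmem hQvar hQmean homg.le (hym2 i) (hUmeas i m)
      (hind i m) (hUdist i m) (hgmeas m _) (hGX i m) c
  have hZmem2 : ∀ (i : Fin n) (m : Fin M),
      MemLp (fun w => Q (g m (π m i) (y (i:ℕ) w)) (U i m w)) 2 P :=
    fun i m => comp_memLp hQmeas hQmem hQvar (hym2 i) (hUmeas i m) (hind i m)
      (hUdist i m) (hgmeas m _) (hGX i m)
  have hZint : ∀ (i : Fin n) (m : Fin M),
      Integrable (fun w => (inner ℝ (Q (g m (π m i) (y (i:ℕ) w)) (U i m w)) c : ℝ)) P :=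
    fun i m => ((hZmem2 i m).integrable one_le_two).inner_const c
  have hgint : ∀ (i : Fin n) (m : Fin M),
      Integrable (fun w => (inner ℝ (g m (π m i) (y (i:ℕ) w)) c : ℝ)) P :=
    fun i m => ((hGX i m).integrable one_le_two).inner_const c
  have hEint : ∀ i : Fin n, Integrable (fun w => ‖y (i:ℕ) w - xt‖ ^ 2) P := by
    intro i
    have hmem : MemLp (fun w => y (i:ℕ) w - xt) 2 P := (hyL2 i).sub (memLp_const xt)
    exact (memLp_two_iff_integrable_sq_norm hmem.1).1 hmem
  -- the averaged summands
  set Fi : Fin n → EuclideanSpace ℝ (Fin d) → ℝ :=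
    fun i x => (M:ℝ)⁻¹ * ∑ m, f m (π m i) x with hFi
  have hgradFi : ∀ (i : Fin n) (z : EuclideanSpace ℝ (Fin d)),
      HasGradientAt (Fi i) ((M:ℝ)⁻¹ • ∑ m, g m (π m i) z) z :=
    fun i z => hasGradientAt_const_mul_sum _ _ _ _ _ (fun m _ => hgrad m (π m i) z)
  -- pointwise inequality
  have hpt : ∀ (i : Fin n) (z : EuclideanSpace ℝ (Fin d)),
      Fi i xt - Fi i xstar - Ltil / 2 * ‖z - xt‖ ^ 2
        ≤ (M:ℝ)⁻¹ * ∑ m, (inner ℝ (g m (π m i) z) c : ℝ) := by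
    intro i z
    have hdes := descent_lemma (hgradFi i) (fun a b => hLtil π i a b) z xt
    rw [real_inner_smul_left] at hdes
    have hcvx : ∀ m : Fin M, f m (π m i) z + (inner ℝ (g m (π m i) z) (xstar - z) : ℝ)
        ≤ f m (π m i) xstar :=
      fun m => convex_grad_ineq (fun x => hgrad m (π m i) x) (hconv m (π m i)) z xstar
    have h2 : (∑ m, f m (π m i) z) + (inner ℝ (∑ m, g m (π m i) z) (xstar - z) : ℝ)
        ≤ ∑ m, f m (π m i) xstar := by
      have := Finset.sum_le_sum (fun m (_ : m ∈ Finset.univ) => hcvx m)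
      simpa [Finset.sum_add_distrib, sum_inner] using this
    have h2' := mul_le_mul_of_nonneg_left h2 (inv_nonneg.2 hMr.le)
    rw [mul_add] at h2'
    have esum : ((M:ℝ)⁻¹ * ∑ m, (inner ℝ (g m (π m i) z) c : ℝ))
        = (M:ℝ)⁻¹ * (inner ℝ (∑ m, g m (π m i) z) c : ℝ) := by
      rw [sum_inner]
    have esplit : (inner ℝ (∑ m, g m (π m i) z) c : ℝ)
        = (inner ℝ (∑ m, g m (π m i) z) (xt - z) : ℝ)
          - (inner ℝ (∑ m, g m (π m i) z) (xstar - z) : ℝ) := by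
      rw [← inner_sub_right]
      congr 1
      rw [hc]
      abel
    have enorm : ‖xt - z‖ ^ 2 = ‖z - xt‖ ^ 2 := by rw [norm_sub_rev]
    rw [enorm] at hdes
    rw [esum, esplit, mul_sub]
    simp only [hFi] at hdes ⊢
    linarith
  -- integral version per step
  have hJmono : ∀ i : Fin n,
      Fi i xt - Fi i xstar - Ltil / 2 * ∫ w, ‖y (i:ℕ) w - xt‖ ^ 2 ∂P
        ≤ ∫ w, ((M:ℝ)⁻¹ * ∑ m, (inner ℝ (g m (π m i) (y (i:ℕ) w)) c : ℝ)) ∂P := by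
    intro i
    have hLHSint : Integrable
        (fun w => Fi i xt - Fi i xstar - Ltil / 2 * ‖y (i:ℕ) w - xt‖ ^ 2) P :=
      (integrable_const _).sub ((hEint i).const_mul _)
    have hRHSint : Integrable
        (fun w => (M:ℝ)⁻¹ * ∑ m, (inner ℝ (g m (π m i) (y (i:ℕ) w)) c : ℝ)) P :=
      (integrable_finset_sum _ (fun m _ => hgint i m)).const_mul _
    have hmono := integral_mono hLHSint hRHSint (fun w => hpt i (y (i:ℕ) w))
    have hLcalc : ∫ w, (Fi i xt - Fi i xstar - Ltil / 2 * ‖y (i:ℕ) w - xt‖ ^ 2) ∂P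
        = Fi i xt - Fi i xstar - Ltil / 2 * ∫ w, ‖y (i:ℕ) w - xt‖ ^ 2 ∂P := by
      rw [integral_sub (integrable_const _) ((hEint i).const_mul _), integral_const,
        integral_const_mul]
      simp [measure_univ]
    rwa [hLcalc] at hmono
  -- compute the main integral using unbiasedness
  have hIeq : ∫ w, (inner ℝ (gt w) c : ℝ) ∂P
      = ((M:ℝ) * n)⁻¹ * ∑ i : Fin n, ∑ m,
          ∫ w, (inner ℝ (g m (π m i) (y (i:ℕ) w)) c : ℝ) ∂P := by
    have hptw : ∀ w, (inner ℝ (gt w) c : ℝ)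
        = ((M:ℝ) * n)⁻¹ * ∑ i : Fin n, ∑ m,
            (inner ℝ (Q (g m (π m i) (y (i:ℕ) w)) (U i m w)) c : ℝ) := by
      intro w
      rw [hgt w, real_inner_smul_left, sum_inner]
      congr 1
      exact Finset.sum_congr rfl fun i _ => sum_inner _ _ _
    calc ∫ w, (inner ℝ (gt w) c : ℝ) ∂P
        = ∫ w, (((M:ℝ) * n)⁻¹ * ∑ i : Fin n, ∑ m,
            (inner ℝ (Q (g m (π m i) (y (i:ℕ) w)) (U i m w)) c : ℝ)) ∂P :=
          integral_congr_ae (Filter.Eventually.of_forall hptw)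
      _ = ((M:ℝ) * n)⁻¹ * ∫ w, (∑ i : Fin n, ∑ m,
            (inner ℝ (Q (g m (π m i) (y (i:ℕ) w)) (U i m w)) c : ℝ)) ∂P :=
          integral_const_mul _ _
      _ = ((M:ℝ) * n)⁻¹ * ∑ i : Fin n, ∑ m,
            ∫ w, (inner ℝ (Q (g m (π m i) (y (i:ℕ) w)) (U i m w)) c : ℝ) ∂P := by
          congr 1
          rw [integral_finset_sum _ (fun i _ => integrable_finset_sum _
            (fun m _ => hZint i m))]
          exact Finset.sum_congr rfl fun i _ => integral_finset_sum _
            (fun m _ => hZint i m)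
      _ = ((M:ℝ) * n)⁻¹ * ∑ i : Fin n, ∑ m,
            ∫ w, (inner ℝ (g m (π m i) (y (i:ℕ) w)) c : ℝ) ∂P := by
          congr 1
          exact Finset.sum_congr rfl fun i _ => Finset.sum_congr rfl
            fun m _ => hmean i m
  have hJi : ∀ i : Fin n,
      ∫ w, ((M:ℝ)⁻¹ * ∑ m, (inner ℝ (g m (π m i) (y (i:ℕ) w)) c : ℝ)) ∂P
        = (M:ℝ)⁻¹ * ∑ m, ∫ w, (inner ℝ (g m (π m i) (y (i:ℕ) w)) c : ℝ) ∂P := by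
    intro i
    rw [integral_const_mul]
    congr 1
    exact integral_finset_sum _ (fun m _ => hgint i m)
  have hIeq3 : ∫ w, (inner ℝ (gt w) c : ℝ) ∂P
      = (n:ℝ)⁻¹ * ∑ i : Fin n,
          ∫ w, ((M:ℝ)⁻¹ * ∑ m, (inner ℝ (g m (π m i) (y (i:ℕ) w)) c : ℝ)) ∂P := by
    rw [hIeq]
    rw [Finset.sum_congr rfl (fun i (_ : i ∈ Finset.univ) => (hJi i))]
    rw [← Finset.mul_sum, mul_inv]
    ring
  -- sum of the Fi
  have hFsum : ∀ x, ∑ i : Fin n, Fi i x = (n:ℝ) * fbar x := by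
    intro x
    rw [hfbar]
    simp only [hFi]
    rw [← Finset.mul_sum, Finset.sum_comm]
    have hperm : ∀ m : Fin M, ∑ i : Fin n, f m (π m i) x = ∑ j, f m j x :=
      fun m => Equiv.sum_comp (π m) (fun j => f m j x)
    rw [Finset.sum_congr rfl fun m _ => hperm m, mul_inv]
    field_simp
  -- assemble
  set SE := ∑ i : Fin n, ∫ w, ‖y (i:ℕ) w - xt‖ ^ 2 ∂P with hSE
  have hSum2 : ∑ i : Fin n, (Fi i xt - Fi i xstar
        - Ltil / 2 * ∫ w, ‖y (i:ℕ) w - xt‖ ^ 2 ∂P)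
      = (n:ℝ) * (fbar xt - fbar xstar) - Ltil / 2 * SE := by
    rw [Finset.sum_sub_distrib, Finset.sum_sub_distrib, hFsum, hFsum, ← Finset.mul_sum, hSE]
    ring
  have hImono : (fbar xt - fbar xstar) - Ltil / (2 * n) * SE
      ≤ ∫ w, (inner ℝ (gt w) c : ℝ) ∂P := by
    rw [hIeq3]
    have h1 := Finset.sum_le_sum (fun i (_ : i ∈ Finset.univ) => hJmono i)
    rw [hSum2] at h1
    have h2 := mul_le_mul_of_nonneg_left h1 (inv_nonneg.2 hNn.le)
    have h3 : (fbar xt - fbar xstar) - Ltil / (2 * n) * SE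
        = (n:ℝ)⁻¹ * ((n:ℝ) * (fbar xt - fbar xstar) - Ltil / 2 * SE) := by
      field_simp
    rw [h3]
    exact h2
  have hΔ : μ / 2 * ‖xt - xstar‖ ^ 2 ≤ fbar xt - fbar xstar := strong_min hμ hsc hmin xt
  have hτpos : 0 < τ := by rw [hτ]; positivity
  have h2τ := mul_le_mul_of_nonneg_left hImono (by positivity : (0:ℝ) ≤ 2 * τ)
  have hrw : 2 * τ * ((fbar xt - fbar xstar) - Ltil / (2 * n) * SE)
      = 2 * τ * (fbar xt - fbar xstar) - τ * Ltil / n * SE := by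
    field_simp
  rw [hrw] at h2τ
  have hΔ2 : τ * μ / 2 * ‖xt - xstar‖ ^ 2 ≤ τ * (fbar xt - fbar xstar) := by
    calc τ * μ / 2 * ‖xt - xstar‖ ^ 2 = τ * (μ / 2 * ‖xt - xstar‖ ^ 2) := by ring
      _ ≤ τ * (fbar xt - fbar xstar) := mul_le_mul_of_nonneg_left hΔ hτpos.le
  linarith
end

section
/- Second-moment bound for the Q-NASTYA server estimator: Suppose Q is a compression operator with parameter ω > 0, f is μ-strongly convex, each f_m^i is convex and L_{i,m}-smooth with L_max = max_{i,m} L_{i,m}. Then in round t of Q-NASTYA, with g_t = (1/M)Σ_{m=1}^M Q(g_{t,m}) and g_{t,m} = (1/n)Σ_{i=0}^{n−1}∇f_m^{π_m(i)}(x_{t,m}^i), E_Q[‖g_t‖²] ≤ (2L_max²(1 + ω/M)/(Mn))Σ_{m=1}^M Σ_{i=0}^{n−1}‖x_{t,m}^i − x_t‖² + 8L_max(1 + ω/M)(f(x_t) − f(x*)) + (4ω/M)ζ*², where E_Q denotes expectation over the compression randomness at round t. -/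
open MeasureTheory ProbabilityTheory Finset
open scoped RealInnerProductSpace

set_option linter.unusedSectionVars false
set_option maxHeartbeats 1000000

section AuxAnalysis

variable {E : Type*} [NormedAddCommGroup E] [InnerProductSpace ℝ E] [CompleteSpace E]

lemma line_hasDerivAt' (w v : E) (t : ℝ) : HasDerivAt (fun t : ℝ => w + t • v) v t := by
  simpa using ((hasDerivAt_id t).smul_const v).const_add w

lemma comp_line_hasDerivAt' (h : E → ℝ) (h' : E → E) (w v : E) (t : ℝ)
    (hg : HasGradientAt h (h' (w + t • v)) (w + t • v)) :
    HasDerivAt (fun t : ℝ => h (w + t • v)) ⟪h' (w + t • v), v⟫ t := by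
  have h1 := line_hasDerivAt' w v t
  have h2 : HasFDerivAt h (InnerProductSpace.toDual ℝ E (h' (w + t • v))) (w + t • v) :=
    (hasGradientAt_iff_hasFDerivAt).1 hg
  exact h2.comp_hasDerivAt t h1

lemma grad_ineq' (h : E → ℝ) (h' : E → E) (hg : ∀ x, HasGradientAt h (h' x) x)
    (hc : ConvexOn ℝ Set.univ h) (x y : E) :
    ⟪h' y, x - y⟫ ≤ h x - h y := by
  have hφc : ConvexOn ℝ Set.univ (fun t : ℝ => h (y + t • (x - y))) := by
    have := hc.comp_affineMap (AffineMap.lineMap y x : ℝ →ᵃ[ℝ] E)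
    have he : (fun t : ℝ => h (y + t • (x - y))) = (h ∘ (AffineMap.lineMap y x : ℝ →ᵃ[ℝ] E)) := by
      funext t
      simp [AffineMap.lineMap_apply, add_comm]
    rw [he]
    simpa using this
  have hd : HasDerivAt (fun t : ℝ => h (y + t • (x - y))) ⟪h' (y + (0 : ℝ) • (x - y)), x - y⟫ 0 :=
    comp_line_hasDerivAt' h h' y (x - y) 0 (hg _)
  have := hφc.le_slope_of_hasDerivAt (Set.mem_univ 0) (Set.mem_univ 1) zero_lt_one
    (by simpa using hd)
  simp [slope_def_field] at this
  simpa using this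

lemma descent' (h : E → ℝ) (h' : E → E) (hg : ∀ x, HasGradientAt h (h' x) x)
    (L : ℝ) (hL : ∀ a b, ‖h' a - h' b‖ ≤ L * ‖a - b‖) (w v : E) :
    h (w + v) ≤ h w + ⟪h' w, v⟫ + L / 2 * ‖v‖ ^ 2 := by
  set χ : ℝ → ℝ := fun t => h (w + t • v) - t * ⟪h' w, v⟫ - L * t ^ 2 * ‖v‖ ^ 2 / 2 with hχ
  have hd : ∀ t : ℝ, HasDerivAt χ
      (⟪h' (w + t • v), v⟫ - ⟪h' w, v⟫ - L * t * ‖v‖ ^ 2) t := by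
    intro t
    have h1 := comp_line_hasDerivAt' h h' w v t (hg _)
    have h2 : HasDerivAt (fun t : ℝ => t * ⟪h' w, v⟫) ⟪h' w, v⟫ t := by
      simpa using (hasDerivAt_id t).mul_const (⟪h' w, v⟫)
    have h3 : HasDerivAt (fun t : ℝ => L * t ^ 2 * ‖v‖ ^ 2 / 2) (L * t * ‖v‖ ^ 2) t := by
      have := (((hasDerivAt_pow 2 t).const_mul L).mul_const (‖v‖ ^ 2)).div_const 2
      refine this.congr_deriv ?_
      norm_num
      ring
    exact (h1.sub h2).sub h3
  have hanti : AntitoneOn χ (Set.Icc (0 : ℝ) 1) := by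
    apply antitoneOn_of_deriv_nonpos (convex_Icc 0 1)
    · exact (Differentiable.continuous fun t => (hd t).differentiableAt).continuousOn
    · intro t _
      exact ((hd t).differentiableAt).differentiableWithinAt
    · intro t ht
      rw [interior_Icc] at ht
      rw [(hd t).deriv]
      have hb : ⟪h' (w + t • v) - h' w, v⟫ ≤ ‖h' (w + t • v) - h' w‖ * ‖v‖ :=
        real_inner_le_norm _ _
      have hc : ‖h' (w + t • v) - h' w‖ ≤ L * (t * ‖v‖) := by
        have := hL (w + t • v) w
        simpa [norm_smul, abs_of_pos ht.1, mul_assoc] using this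
      have hinner : ⟪h' (w + t • v), v⟫ - ⟪h' w, v⟫ = ⟪h' (w + t • v) - h' w, v⟫ := by
        rw [inner_sub_left]
      rw [hinner]
      nlinarith [norm_nonneg v, norm_nonneg (h' (w + t • v) - h' w), ht.1.le]
  have := hanti (Set.mem_Icc.2 ⟨le_refl 0, zero_le_one⟩)
    (Set.mem_Icc.2 ⟨zero_le_one, le_refl 1⟩) zero_le_one
  simp only [hχ] at this
  simp at this
  linarith [this]

lemma psi_grad' (h : E → ℝ) (h' : E → E) (hg : ∀ x, HasGradientAt h (h' x) x) (c : E) (z : E) :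
    HasGradientAt (fun u => h u - ⟪c, u⟫) (h' z - c) z := by
  rw [hasGradientAt_iff_hasFDerivAt]
  have h1 : HasFDerivAt h (InnerProductSpace.toDual ℝ E (h' z)) z :=
    (hasGradientAt_iff_hasFDerivAt).1 (hg z)
  have h2 : HasFDerivAt (fun u : E => ⟪c, u⟫) (InnerProductSpace.toDual ℝ E c : E →L[ℝ] ℝ) z :=
    (InnerProductSpace.toDual ℝ E c).hasFDerivAt
  have := h1.sub h2
  refine HasFDerivAt.congr_fderiv this ?_
  ext u
  simp [inner_sub_left]

lemma cocoercive' (h : E → ℝ) (h' : E → E) (hg : ∀ x, HasGradientAt h (h' x) x)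
    (hc : ConvexOn ℝ Set.univ h)
    (L : ℝ) (hL : ∀ a b, ‖h' a - h' b‖ ≤ L * ‖a - b‖) (x y : E) :
    ‖h' x - h' y‖ ^ 2 ≤ 2 * L * (h x - h y - ⟪h' y, x - y⟫) := by
  rcases lt_trichotomy L 0 with hL0 | hL0 | hL0
  · rcases eq_or_ne x y with rfl | hxy
    · simp
    · exfalso
      have h1 := hL x y
      have h2 : 0 < ‖x - y‖ := by
        rw [norm_pos_iff, sub_ne_zero]; exact hxy
      nlinarith [norm_nonneg (h' x - h' y)]
  · subst hL0
    have h1 := hL x y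
    have h2 : ‖h' x - h' y‖ = 0 := le_antisymm (by simpa using h1) (norm_nonneg _)
    simp [h2]
  · set ψ : E → ℝ := fun u => h u - ⟪h' y, u⟫ with hψ
    set ψ' : E → E := fun u => h' u - h' y with hψ'
    have hψg : ∀ z, HasGradientAt ψ (ψ' z) z := fun z => psi_grad' h h' hg (h' y) z
    set u : E := h' x - h' y with hu
    have hmin : ∀ z, ψ y ≤ ψ z := by
      intro z
      have := grad_ineq' h h' hg hc z y
      have he : ψ z - ψ y = h z - h y - ⟪h' y, z - y⟫ := by
        simp only [hψ, inner_sub_right]; ring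
      linarith [he ▸ sub_nonneg.2 (by linarith : (⟪h' y, z - y⟫ : ℝ) ≤ h z - h y)]
    have hψL : ∀ a b, ‖ψ' a - ψ' b‖ ≤ L * ‖a - b‖ := by
      intro a b; simpa [hψ'] using hL a b
    have hdes := descent' ψ ψ' hψg L hψL x (-(L⁻¹ • u))
    have hψ'x : ψ' x = u := rfl
    have e1 : (⟪ψ' x, -(L⁻¹ • u)⟫ : ℝ) = -(L⁻¹ * ‖u‖ ^ 2) := by
      rw [hψ'x, inner_neg_right, real_inner_smul_right, real_inner_self_eq_norm_sq]
    have e2 : ‖-(L⁻¹ • u)‖ ^ 2 = L⁻¹ ^ 2 * ‖u‖ ^ 2 := by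
      rw [norm_neg, norm_smul]
      simp [abs_of_pos (inv_pos.2 hL0), mul_pow]
    rw [e1, e2] at hdes
    have h3 := hmin (x + -(L⁻¹ • u))
    have h4 : ψ y ≤ ψ x - L⁻¹ * ‖u‖ ^ 2 + L / 2 * (L⁻¹ ^ 2 * ‖u‖ ^ 2) := le_trans h3 (by linarith)
    have h5 : L / 2 * (L⁻¹ ^ 2 * ‖u‖ ^ 2) = (2 * L)⁻¹ * ‖u‖ ^ 2 := by
      field_simp
    have h6 : ψ x - ψ y = h x - h y - ⟪h' y, x - y⟫ := by
      simp only [hψ, inner_sub_right]; ring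
    have h7 : (2 * L)⁻¹ * ‖u‖ ^ 2 ≤ ψ x - ψ y := by
      rw [h5] at h4
      have : L⁻¹ * ‖u‖ ^ 2 - (2 * L)⁻¹ * ‖u‖ ^ 2 = (2 * L)⁻¹ * ‖u‖ ^ 2 := by
        field_simp; ring
      linarith
    rw [h6] at h7
    calc ‖u‖ ^ 2 = 2 * L * ((2 * L)⁻¹ * ‖u‖ ^ 2) := by field_simp
    _ ≤ 2 * L * (h x - h y - ⟪h' y, x - y⟫) :=
        mul_le_mul_of_nonneg_left h7 (by linarith)

lemma norm_sum_sq_le' {ι : Type*} (s : Finset ι) (z : ι → E) :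
    ‖∑ i ∈ s, z i‖ ^ 2 ≤ #s * ∑ i ∈ s, ‖z i‖ ^ 2 := by
  calc ‖∑ i ∈ s, z i‖ ^ 2 ≤ (∑ i ∈ s, ‖z i‖) ^ 2 := by
        apply pow_le_pow_left₀ (norm_nonneg _) (norm_sum_le s z)
  _ ≤ #s * ∑ i ∈ s, ‖z i‖ ^ 2 := sq_sum_le_card_mul_sum_sq

lemma norm_add3_sq_le' (x y z : E) :
    ‖x + y + z‖ ^ 2 ≤ 2 * ‖x‖ ^ 2 + 4 * ‖y‖ ^ 2 + 4 * ‖z‖ ^ 2 := by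
  have h1 : ‖x + y + z‖ ≤ ‖x‖ + ‖y‖ + ‖z‖ := norm_add₃_le
  nlinarith [norm_nonneg x, norm_nonneg y, norm_nonneg z, norm_nonneg (x + y + z),
    sq_nonneg (‖x‖ - ‖y‖ - ‖z‖), sq_nonneg (‖y‖ - ‖z‖)]

lemma norm_add2_sq_le' (x y : E) : ‖x + y‖ ^ 2 ≤ 2 * ‖x‖ ^ 2 + 2 * ‖y‖ ^ 2 := by
  have h1 : ‖x + y‖ ≤ ‖x‖ + ‖y‖ := norm_add_le x y
  nlinarith [norm_nonneg x, norm_nonneg y, norm_nonneg (x + y), sq_nonneg (‖x‖ - ‖y‖)]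

end AuxAnalysis

section AuxProb

lemma euc_norm_sq' {d : ℕ} (v : EuclideanSpace ℝ (Fin d)) : ‖v‖ ^ 2 = ∑ j, (v j) ^ 2 := by
  rw [EuclideanSpace.norm_eq, Real.sq_sqrt (by positivity)]
  simp [sq_abs]

lemma sum_sq_integral' {d M : ℕ} {Ω : Type*} [MeasurableSpace Ω] (P : Measure Ω)
    [IsProbabilityMeasure P]
    (q : Fin M → Ω → EuclideanSpace ℝ (Fin d))
    (hqmem : ∀ m, MemLp (q m) 2 P)
    (hqindep : iIndepFun
      (m := fun _ : Fin M => (inferInstance : MeasurableSpace (EuclideanSpace ℝ (Fin d)))) q P) :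
    ∫ w, ‖∑ m, q m w‖ ^ 2 ∂P
      = (∑ m, ∫ w, ‖q m w - ∫ w', q m w' ∂P‖ ^ 2 ∂P) + ‖∑ m, ∫ w, q m w ∂P‖ ^ 2 := by
  set a : Fin M → EuclideanSpace ℝ (Fin d) := fun m => ∫ w, q m w ∂P with ha
  have hint : ∀ m, Integrable (q m) P := fun m =>
    memLp_one_iff_integrable.1 ((hqmem m).mono_exponent one_le_two)
  have hXmem : ∀ m (j : Fin d), MemLp (fun w => q m w j) 2 P := fun m j =>
    (EuclideanSpace.proj (𝕜 := ℝ) j).comp_memLp' (hqmem m)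
  have hproj_meas : ∀ j : Fin d, Measurable (fun v : EuclideanSpace ℝ (Fin d) => v j) :=
    fun j => (EuclideanSpace.proj (𝕜 := ℝ) j).continuous.measurable
  have haj : ∀ m (j : Fin d), a m j = ∫ w, q m w j ∂P := by
    intro m j
    have := (EuclideanSpace.proj (𝕜 := ℝ) j).integral_comp_comm (hint m)
    simpa [ha] using this.symm
  have hSmem : ∀ j : Fin d, MemLp (fun w => ∑ m, q m w j) 2 P := by
    intro j
    have h0 := memLp_finset_sum' (μ := P) univ (fun m (_ : m ∈ univ) => hXmem m j)
    have : (∑ m : Fin M, fun w => q m w j) = (fun w => ∑ m, q m w j) := by funext w; simp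
    rwa [this] at h0
  have step1 : ∫ w, ‖∑ m, q m w‖ ^ 2 ∂P = ∑ j, ∫ w, (∑ m, q m w j) ^ 2 ∂P := by
    rw [← integral_finset_sum]
    · apply integral_congr_ae
      filter_upwards with w
      rw [euc_norm_sq']
      congr 1
      ext j
      congr 1
      rw [WithLp.ofLp_sum, Finset.sum_apply]
    · exact fun j _ => (hSmem j).integrable_sq
  have step2 : ∀ j : Fin d, ∫ w, (∑ m, q m w j) ^ 2 ∂P
      = (∑ m, ∫ w, (q m w j - a m j) ^ 2 ∂P) + (∑ m, a m j) ^ 2 := by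
    intro j
    have hsum_eq : (fun w => ∑ m, q m w j) = ∑ m, (fun w => q m w j) := by
      funext w; simp
    have hvar := variance_eq_sub (hSmem j)
    have hvsum : variance (fun w => ∑ m, q m w j) P = ∑ m, variance (fun w => q m w j) P := by
      rw [hsum_eq]
      apply IndepFun.variance_sum (fun m _ => hXmem m j)
      intro m _ k _ hmk
      exact (hqindep.indepFun hmk).comp (hproj_meas j) (hproj_meas j)
    have hvm : ∀ m, variance (fun w => q m w j) P = ∫ w, (q m w j - a m j) ^ 2 ∂P := by
      intro m
      rw [variance_eq_integral (hXmem m j).aestronglyMeasurable.aemeasurable, haj m j]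
    have hEsum : ∫ w, (∑ m, q m w j) ∂P = ∑ m, a m j := by
      rw [integral_finset_sum _ (fun m _ =>
        ((hXmem m j).mono_exponent one_le_two).integrable le_rfl)]
      exact Finset.sum_congr rfl fun m _ => (haj m j).symm
    have : ∫ w, (∑ m, q m w j) ^ 2 ∂P
        = variance (fun w => ∑ m, q m w j) P + (∫ w, (∑ m, q m w j) ∂P) ^ 2 := by
      rw [hvar]
      have he : P[(fun w => ∑ m, q m w j) ^ 2] = ∫ w, (∑ m, q m w j) ^ 2 ∂P := by
        apply integral_congr_ae; filter_upwards with w; simp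
      rw [he]; ring
    rw [this, hvsum, hEsum]
    congr 1
    exact Finset.sum_congr rfl fun m _ => hvm m
  rw [step1]
  have step3 : ∑ j, ((∑ m, ∫ w, (q m w j - a m j) ^ 2 ∂P) + (∑ m, a m j) ^ 2)
      = (∑ m, ∫ w, ‖q m w - a m‖ ^ 2 ∂P) + ‖∑ m, a m‖ ^ 2 := by
    rw [Finset.sum_add_distrib]
    congr 1
    · rw [Finset.sum_comm]
      apply Finset.sum_congr rfl
      intro m _
      rw [← integral_finset_sum]
      · apply integral_congr_ae
        filter_upwards with w
        rw [euc_norm_sq']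
        apply Finset.sum_congr rfl
        intro j _
        congr 1
      · intro j _
        exact ((hXmem m j).sub (memLp_const (a m j))).integrable_sq
    · rw [euc_norm_sq']
      apply Finset.sum_congr rfl
      intro j _
      congr 1
      rw [WithLp.ofLp_sum, Finset.sum_apply]
  rw [← step3]
  exact Finset.sum_congr rfl fun j _ => step2 j

end AuxProb

section AuxDet

lemma unroll' {d n : ℕ} (γ : ℝ) (G : Fin n → EuclideanSpace ℝ (Fin d))
    (y : ℕ → EuclideanSpace ℝ (Fin d)) (xt : EuclideanSpace ℝ (Fin d))
    (hy0 : y 0 = xt) (hstep : ∀ i : Fin n, y ((i : ℕ) + 1) = y i - γ • G i) :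
    y n = xt - γ • ∑ i : Fin n, G i := by
  suffices h : ∀ k, k ≤ n →
      y k = xt - γ • ∑ i ∈ univ.filter (fun i : Fin n => (i : ℕ) < k), G i by
    have hn := h n le_rfl
    rw [hn]
    congr 2
    apply Finset.sum_congr _ (fun _ _ => rfl)
    apply Finset.filter_true_of_mem
    intro i _
    exact i.is_lt
  intro k
  induction k with
  | zero => simp [hy0]
  | succ k ih =>
    intro hk
    have hkn : k < n := hk
    have ihk := ih (Nat.le_of_succ_le hk)
    set ik : Fin n := ⟨k, hkn⟩ with hik
    have h1 : y (k + 1) = y k - γ • G ik := hstep ik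
    have h2 : univ.filter (fun i : Fin n => (i : ℕ) < k + 1)
        = insert ik (univ.filter (fun i : Fin n => (i : ℕ) < k)) := by
      ext i
      simp only [mem_filter, mem_univ, true_and, mem_insert, Fin.ext_iff, hik]
      omega
    rw [h1, ihk, h2, Finset.sum_insert (by simp [hik]), smul_add]
    abel

lemma grad_sum_zero' {d M n : ℕ} (hM : 0 < M) (hn : 0 < n)
    (f : Fin M → Fin n → EuclideanSpace ℝ (Fin d) → ℝ)
    (g : Fin M → Fin n → EuclideanSpace ℝ (Fin d) → EuclideanSpace ℝ (Fin d))
    (hgrad : ∀ m i x, HasGradientAt (f m i) (g m i x) x)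
    (fbar : EuclideanSpace ℝ (Fin d) → ℝ)
    (hfbar : fbar = fun x => ((M : ℝ) * n)⁻¹ * ∑ m, ∑ j, f m j x)
    (xstar : EuclideanSpace ℝ (Fin d))
    (hmin : ∀ y, fbar xstar ≤ fbar y) :
    ∑ m, ∑ j, g m j xstar = 0 := by
  have h1 : HasFDerivAt (fun x => ∑ m, ∑ j, f m j x)
      (∑ m, ∑ j, (InnerProductSpace.toDual ℝ (EuclideanSpace ℝ (Fin d)) (g m j xstar) :
        EuclideanSpace ℝ (Fin d) →L[ℝ] ℝ)) xstar := by
    apply HasFDerivAt.fun_sum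
    intro m _
    apply HasFDerivAt.fun_sum
    intro j _
    exact hasGradientAt_iff_hasFDerivAt.1 (hgrad m j xstar)
  have hf : HasFDerivAt fbar
      (((M : ℝ) * n)⁻¹ • ∑ m, ∑ j, (InnerProductSpace.toDual ℝ (EuclideanSpace ℝ (Fin d))
        (g m j xstar) : EuclideanSpace ℝ (Fin d) →L[ℝ] ℝ)) xstar := by
    rw [hfbar]
    exact h1.const_mul _
  have hloc : IsLocalMin fbar xstar := Filter.Eventually.of_forall hmin
  have hz := hloc.hasFDerivAt_eq_zero hf
  have hdual : InnerProductSpace.toDual ℝ (EuclideanSpace ℝ (Fin d))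
      (((M : ℝ) * n)⁻¹ • ∑ m, ∑ j, g m j xstar) = 0 := by
    rw [_root_.map_smul, _root_.map_sum]
    simp_rw [_root_.map_sum]
    exact_mod_cast hz
  have h0 : (((M : ℝ) * n)⁻¹ • ∑ m, ∑ j, g m j xstar) = 0 :=
    (LinearIsometryEquiv.map_eq_zero_iff _).1 hdual
  have hne : ((M : ℝ) * n)⁻¹ ≠ 0 := by
    apply inv_ne_zero
    positivity
  exact (smul_eq_zero.1 h0).resolve_left hne

end AuxDet


/-- **second-moment bound for the Q-NASTYA server estimator.**
Here `q m` is the compressed local update `Q(g_{t,m})` of worker `m`, with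
`g_{t,m} = (x_t − x_{t,m}^n)/(γn)`, and `g_t = (1/M) Σ_m q m`.  -/
theorem q_nastya_second_moment
    {d M n : ℕ} (hM : 0 < M) (hn : 0 < n)
    (f : Fin M → Fin n → EuclideanSpace ℝ (Fin d) → ℝ)
    (g : Fin M → Fin n → EuclideanSpace ℝ (Fin d) → EuclideanSpace ℝ (Fin d))
    (hgrad : ∀ m i x, HasGradientAt (f m i) (g m i x) x)
    (hconv : ∀ m i, ConvexOn ℝ Set.univ (f m i))
    (Lmax : ℝ)
    (hsmooth : ∀ m i x y, ‖g m i x - g m i y‖ ≤ Lmax * ‖x - y‖)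
    (omg : ℝ) (homg : 0 < omg)
    -- f = (1/(Mn)) Σ_m Σ_j f_m^j is μ-strongly convex with unique minimizer x*
    (μ : ℝ) (hμ : 0 < μ)
    (fbar : EuclideanSpace ℝ (Fin d) → ℝ)
    (hfbar : fbar = fun x => ((M : ℝ) * n)⁻¹ * ∑ m, ∑ j, f m j x)
    (hsc : StrongConvexOn Set.univ μ fbar)
    (xstar : EuclideanSpace ℝ (Fin d))
    (hmin : ∀ y, fbar xstar ≤ fbar y)
    (huniq : ∀ y, (∀ z, fbar y ≤ fbar z) → y = xstar)
    -- round t : current point `xt`, fixed permutations `π`, deterministic local steps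
    (γ : ℝ) (hγ : 0 < γ)
    (xt : EuclideanSpace ℝ (Fin d)) (π : Fin M → Equiv.Perm (Fin n))
    (y : Fin M → ℕ → EuclideanSpace ℝ (Fin d))
    (hy0 : ∀ m, y m 0 = xt)
    (hystep : ∀ m (i : Fin n), y m ((i : ℕ) + 1) = y m i - γ • g m (π m i) (y m i))
    -- fresh, independent compression randomness of the M workers at round t
    {Ω : Type*} [MeasurableSpace Ω] (P : Measure Ω) [IsProbabilityMeasure P]
    (q : Fin M → Ω → EuclideanSpace ℝ (Fin d))
    (hqmem : ∀ m, MemLp (q m) 2 P)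
    (hqindep : iIndepFun
      (m := fun _ : Fin M => (inferInstance : MeasurableSpace (EuclideanSpace ℝ (Fin d)))) q P)
    (zeta2 : ℝ)
    (hzeta2 : zeta2 = (M : ℝ)⁻¹ * ∑ m, ‖(n : ℝ)⁻¹ • ∑ j, g m j xstar‖ ^ 2)
    -- `q m` is the compressor output `Q(g_{t,m})` (unbiased, relative variance `omg`)
    (hqmean : ∀ m, ∫ w, q m w ∂P = ((γ * n)⁻¹ : ℝ) • (xt - y m n))
    (hqvar : ∀ m, ∫ w, ‖q m w - (((γ * n)⁻¹ : ℝ) • (xt - y m n))‖ ^ 2 ∂P ≤ omg * ‖((γ * n)⁻¹ : ℝ) • (xt - y m n)‖ ^ 2)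
    :
    ∫ w, ‖(M : ℝ)⁻¹ • ∑ m, q m w‖ ^ 2 ∂P
      ≤ 2 * Lmax ^ 2 * (1 + omg / M) / (M * n) * ∑ m, ∑ i : Fin n, ‖y m (i : ℕ) - xt‖ ^ 2
        + 8 * Lmax * (1 + omg / M) * (fbar xt - fbar xstar)
        + 4 * omg / M * zeta2 := by
  have hMR : (0 : ℝ) < M := by exact_mod_cast hM
  have hnR : (0 : ℝ) < n := by exact_mod_cast hn
  -- the local-update averages
  set b : Fin M → EuclideanSpace ℝ (Fin d) :=
    fun m => (n : ℝ)⁻¹ • ∑ i : Fin n, g m (π m i) (y m (i : ℕ)) with hbdef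
  set c : Fin M → EuclideanSpace ℝ (Fin d) :=
    fun m => (n : ℝ)⁻¹ • ∑ j, g m j xt with hcdef
  set sv : Fin M → EuclideanSpace ℝ (Fin d) :=
    fun m => (n : ℝ)⁻¹ • ∑ j, g m j xstar with hsvdef
  have hbm : ∀ m, ((γ * (n : ℝ))⁻¹ : ℝ) • (xt - y m n) = b m := by
    intro m
    have hu := unroll' γ (fun i => g m (π m i) (y m (i : ℕ))) (y m) xt (hy0 m) (hystep m)
    rw [hu, sub_sub_cancel, smul_smul]
    congr 1
    field_simp
  -- second moment decomposition
  have hdecomp := sum_sq_integral' P q hqmem hqindep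
  have hmean' : ∀ m, (∫ w, q m w ∂P) = b m := fun m => (hqmean m).trans (hbm m)
  simp_rw [hmean'] at hdecomp
  have hvarb : ∀ m, ∫ w, ‖q m w - b m‖ ^ 2 ∂P ≤ omg * ‖b m‖ ^ 2 := by
    intro m
    have h := hqvar m
    rw [hbm m] at h
    exact h
  have hLHS : ∫ w, ‖(M : ℝ)⁻¹ • ∑ m, q m w‖ ^ 2 ∂P
      = ((M : ℝ)⁻¹) ^ 2 * ∫ w, ‖∑ m, q m w‖ ^ 2 ∂P := by
    rw [← integral_const_mul]
    apply integral_congr_ae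
    filter_upwards with w
    rw [norm_smul, mul_pow]
    congr 1
    rw [Real.norm_eq_abs, abs_of_nonneg (by positivity : (0:ℝ) ≤ (M : ℝ)⁻¹)]
  -- scalar abbreviations
  set A : ℝ := ∑ m, ∑ i : Fin n, ‖y m (i : ℕ) - xt‖ ^ 2 with hAdef
  set F : ℝ := fbar xt - fbar xstar with hFdef
  set B : ℝ := ∑ m, ‖b m - c m‖ ^ 2 with hBdef
  set C : ℝ := ∑ m, ‖c m - sv m‖ ^ 2 with hCdef
  set G2 : ℝ := ∑ m, ∑ j, ‖g m j xt - g m j xstar‖ ^ 2 with hG2def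
  -- bound B
  have key1 : ∀ m, ‖b m - c m‖ ^ 2 ≤ Lmax ^ 2 * ((n : ℝ)⁻¹ * ∑ i : Fin n, ‖y m (i : ℕ) - xt‖ ^ 2) := by
    intro m
    have hc' : c m = (n : ℝ)⁻¹ • ∑ i : Fin n, g m (π m i) xt := by
      simp only [hcdef]
      congr 1
      exact (Equiv.sum_comp (π m) (fun j => g m j xt)).symm
    rw [hc', hbdef]
    simp only
    rw [← smul_sub, ← Finset.sum_sub_distrib, norm_smul, mul_pow]
    have h1 := norm_sum_sq_le' univ (fun i : Fin n => g m (π m i) (y m (i : ℕ)) - g m (π m i) xt)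
    have h2 : ∑ i : Fin n, ‖g m (π m i) (y m (i : ℕ)) - g m (π m i) xt‖ ^ 2
        ≤ ∑ i : Fin n, Lmax ^ 2 * ‖y m (i : ℕ) - xt‖ ^ 2 := by
      apply Finset.sum_le_sum
      intro i _
      have h3 := hsmooth m (π m i) (y m (i : ℕ)) xt
      calc ‖g m (π m i) (y m (i : ℕ)) - g m (π m i) xt‖ ^ 2
          ≤ (Lmax * ‖y m (i : ℕ) - xt‖) ^ 2 := pow_le_pow_left₀ (norm_nonneg _) h3 2
        _ = Lmax ^ 2 * ‖y m (i : ℕ) - xt‖ ^ 2 := by ring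
    have hcard : (#(univ : Finset (Fin n)) : ℝ) = (n : ℝ) := by simp
    have hnorm : ‖(n : ℝ)⁻¹‖ ^ 2 = ((n : ℝ)⁻¹) ^ 2 := by
      rw [Real.norm_eq_abs, abs_of_nonneg (by positivity)]
    rw [hnorm]
    calc ((n : ℝ)⁻¹) ^ 2 * ‖∑ i : Fin n, (g m (π m i) (y m (i : ℕ)) - g m (π m i) xt)‖ ^ 2
        ≤ ((n : ℝ)⁻¹) ^ 2 * ((n : ℝ) * ∑ i : Fin n, Lmax ^ 2 * ‖y m (i : ℕ) - xt‖ ^ 2) := by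
          apply mul_le_mul_of_nonneg_left _ (by positivity)
          calc ‖∑ i : Fin n, (g m (π m i) (y m (i : ℕ)) - g m (π m i) xt)‖ ^ 2
              ≤ (#(univ : Finset (Fin n)) : ℝ) * ∑ i : Fin n, ‖g m (π m i) (y m (i : ℕ)) - g m (π m i) xt‖ ^ 2 := h1
            _ = (n : ℝ) * ∑ i : Fin n, ‖g m (π m i) (y m (i : ℕ)) - g m (π m i) xt‖ ^ 2 := by rw [hcard]
            _ ≤ (n : ℝ) * ∑ i : Fin n, Lmax ^ 2 * ‖y m (i : ℕ) - xt‖ ^ 2 :=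
                mul_le_mul_of_nonneg_left h2 (by positivity)
      _ = Lmax ^ 2 * ((n : ℝ)⁻¹ * ∑ i : Fin n, ‖y m (i : ℕ) - xt‖ ^ 2) := by
          rw [← Finset.mul_sum]
          field_simp
  have hBb : B ≤ Lmax ^ 2 * ((n : ℝ)⁻¹ * A) := by
    have h : B ≤ ∑ m, Lmax ^ 2 * ((n : ℝ)⁻¹ * ∑ i : Fin n, ‖y m (i : ℕ) - xt‖ ^ 2) :=
      Finset.sum_le_sum fun m _ => key1 m
    refine h.trans_eq ?_
    rw [hAdef, ← Finset.mul_sum]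
    congr 1
    rw [← Finset.mul_sum]
  -- bound C
  have key2 : ∀ m, ‖c m - sv m‖ ^ 2 ≤ (n : ℝ)⁻¹ * ∑ j, ‖g m j xt - g m j xstar‖ ^ 2 := by
    intro m
    rw [hcdef, hsvdef]
    simp only
    rw [← smul_sub, ← Finset.sum_sub_distrib, norm_smul, mul_pow]
    have h1 := norm_sum_sq_le' univ (fun j : Fin n => g m j xt - g m j xstar)
    have hcard : (#(univ : Finset (Fin n)) : ℝ) = (n : ℝ) := by simp
    have hnorm : ‖(n : ℝ)⁻¹‖ ^ 2 = ((n : ℝ)⁻¹) ^ 2 := by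
      rw [Real.norm_eq_abs, abs_of_nonneg (by positivity)]
    rw [hnorm]
    calc ((n : ℝ)⁻¹) ^ 2 * ‖∑ j, (g m j xt - g m j xstar)‖ ^ 2
        ≤ ((n : ℝ)⁻¹) ^ 2 * ((n : ℝ) * ∑ j, ‖g m j xt - g m j xstar‖ ^ 2) := by
          apply mul_le_mul_of_nonneg_left _ (by positivity)
          rw [← hcard]
          exact h1
      _ = (n : ℝ)⁻¹ * ∑ j, ‖g m j xt - g m j xstar‖ ^ 2 := by
          field_simp
  have hCb : C ≤ (n : ℝ)⁻¹ * G2 := by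
    rw [hCdef, hG2def, Finset.mul_sum]
    exact Finset.sum_le_sum fun m _ => key2 m
  -- gradient sum zero at xstar
  have hsum0 : ∑ m, ∑ j, g m j xstar = 0 :=
    grad_sum_zero' hM hn f g hgrad fbar hfbar xstar hmin
  -- cocoercivity bound on G2
  have hG2b : G2 ≤ 2 * Lmax * ((M : ℝ) * n * F) := by
    have hco : ∀ m (j : Fin n), ‖g m j xt - g m j xstar‖ ^ 2
        ≤ 2 * Lmax * (f m j xt - f m j xstar - (inner ℝ (g m j xstar) (xt - xstar) : ℝ)) :=
      fun m j => cocoercive' (f m j) (g m j) (hgrad m j) (hconv m j) Lmax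
        (fun a b => hsmooth m j a b) xt xstar
    have h1 : G2 ≤ ∑ m, ∑ j, 2 * Lmax * (f m j xt - f m j xstar
        - (inner ℝ (g m j xstar) (xt - xstar) : ℝ)) := by
      rw [hG2def]
      exact Finset.sum_le_sum fun m _ => Finset.sum_le_sum fun j _ => hco m j
    have h2 : ∑ m, ∑ j, 2 * Lmax * (f m j xt - f m j xstar
        - (inner ℝ (g m j xstar) (xt - xstar) : ℝ))
        = 2 * Lmax * ((∑ m, ∑ j, f m j xt) - (∑ m, ∑ j, f m j xstar)
          - (inner ℝ (∑ m, ∑ j, g m j xstar) (xt - xstar) : ℝ)) := by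
      simp_rw [← Finset.mul_sum]
      congr 1
      simp_rw [Finset.sum_sub_distrib, sum_inner]
    have h3 : (inner ℝ (∑ m, ∑ j, g m j xstar) (xt - xstar) : ℝ) = 0 := by
      rw [hsum0, inner_zero_left]
    have h4 : (∑ m, ∑ j, f m j xt) = (M : ℝ) * n * fbar xt := by
      rw [hfbar]
      field_simp
    have h5 : (∑ m, ∑ j, f m j xstar) = (M : ℝ) * n * fbar xstar := by
      rw [hfbar]
      field_simp
    rw [h2, h3, h4, h5] at h1
    calc G2 ≤ 2 * Lmax * ((M : ℝ) * n * fbar xt - (M : ℝ) * n * fbar xstar - 0) := h1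
      _ = 2 * Lmax * ((M : ℝ) * n * F) := by rw [hFdef]; ring
  -- nonnegativity facts
  have hAnn : 0 ≤ A := by rw [hAdef]; positivity
  have hBnn : 0 ≤ B := by rw [hBdef]; positivity
  have hCnn : 0 ≤ C := by rw [hCdef]; positivity
  have hG2nn : 0 ≤ G2 := by rw [hG2def]; positivity
  have hFnn : 0 ≤ F := by rw [hFdef]; linarith [hmin xt]
  have hznn : 0 ≤ zeta2 := by rw [hzeta2]; positivity
  have hLFnn : 0 ≤ Lmax * F := by
    by_contra hneg
    push_neg at hneg
    nlinarith [mul_pos hMR hnR, hG2nn.trans hG2b]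
  -- sum of sv norms
  have hsv_sum : ∑ m, ‖sv m‖ ^ 2 = (M : ℝ) * zeta2 := by
    rw [hzeta2, hsvdef]
    field_simp
  -- per-m second moment bound
  have hbm_sq : ∀ m, ‖b m‖ ^ 2 ≤ 2 * ‖b m - c m‖ ^ 2 + 4 * ‖c m - sv m‖ ^ 2 + 4 * ‖sv m‖ ^ 2 := by
    intro m
    have h := norm_add3_sq_le' (b m - c m) (c m - sv m) (sv m)
    have he : b m - c m + (c m - sv m) + sv m = b m := by abel
    rwa [he] at h
  have hSb : ∑ m, ‖b m‖ ^ 2 ≤ 2 * B + 4 * C + 4 * ((M : ℝ) * zeta2) := by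
    calc ∑ m, ‖b m‖ ^ 2
        ≤ ∑ m, (2 * ‖b m - c m‖ ^ 2 + 4 * ‖c m - sv m‖ ^ 2 + 4 * ‖sv m‖ ^ 2) :=
          Finset.sum_le_sum fun m _ => hbm_sq m
      _ = 2 * B + 4 * C + 4 * ((M : ℝ) * zeta2) := by
          rw [Finset.sum_add_distrib, Finset.sum_add_distrib, ← Finset.mul_sum,
            ← Finset.mul_sum, ← Finset.mul_sum, hsv_sum, hBdef, hCdef]
  -- bound for the mean term
  have hsv0 : ∑ m, sv m = 0 := by
    rw [hsvdef, ← Finset.smul_sum, hsum0, smul_zero]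
  have hsumb_sq : ‖∑ m, b m‖ ^ 2 ≤ 2 * (M : ℝ) * B + 2 * (M : ℝ) * C := by
    have he : ∑ m, b m = (∑ m, (b m - c m)) + (∑ m, (c m - sv m)) := by
      rw [← Finset.sum_add_distrib]
      have : ∀ m : Fin M, b m - c m + (c m - sv m) = b m - sv m := fun m => by abel
      simp_rw [this]
      rw [Finset.sum_sub_distrib, hsv0, sub_zero]
    rw [he]
    have h1 := norm_add2_sq_le' (∑ m, (b m - c m)) (∑ m, (c m - sv m))
    have h2 := norm_sum_sq_le' univ (fun m : Fin M => b m - c m)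
    have h3 := norm_sum_sq_le' univ (fun m : Fin M => c m - sv m)
    have hcard : (#(univ : Finset (Fin M)) : ℝ) = (M : ℝ) := by simp
    rw [hcard] at h2 h3
    rw [hBdef] at *
    nlinarith
  -- assemble
  rw [hLHS, hdecomp]
  have hV : ∑ m, ∫ w, ‖q m w - b m‖ ^ 2 ∂P ≤ omg * (2 * B + 4 * C + 4 * ((M : ℝ) * zeta2)) := by
    calc ∑ m, ∫ w, ‖q m w - b m‖ ^ 2 ∂P ≤ ∑ m, omg * ‖b m‖ ^ 2 :=
          Finset.sum_le_sum fun m _ => hvarb m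
      _ = omg * ∑ m, ‖b m‖ ^ 2 := by rw [← Finset.mul_sum]
      _ ≤ omg * (2 * B + 4 * C + 4 * ((M : ℝ) * zeta2)) :=
          mul_le_mul_of_nonneg_left hSb (le_of_lt homg)
  have hmain : ((M : ℝ)⁻¹) ^ 2 * ((∑ m, ∫ w, ‖q m w - b m‖ ^ 2 ∂P) + ‖∑ m, b m‖ ^ 2)
      ≤ ((M : ℝ)⁻¹) ^ 2 * (omg * (2 * B + 4 * C + 4 * ((M : ℝ) * zeta2))
        + (2 * (M : ℝ) * B + 2 * (M : ℝ) * C)) := by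
    apply mul_le_mul_of_nonneg_left _ (by positivity)
    linarith
  refine le_trans hmain ?_
  -- final arithmetic
  have e1 : ((M : ℝ)⁻¹) ^ 2 * (omg * (2 * B + 4 * C + 4 * ((M : ℝ) * zeta2))
        + (2 * (M : ℝ) * B + 2 * (M : ℝ) * C))
      = (2 * ((M : ℝ) + omg) * ((M : ℝ)⁻¹) ^ 2) * B
        + ((2 * (M : ℝ) + 4 * omg) * ((M : ℝ)⁻¹) ^ 2) * C + 4 * omg / (M : ℝ) * zeta2 := by
    field_simp
    ring
  rw [e1]
  have hB2 : (2 * ((M : ℝ) + omg) * ((M : ℝ)⁻¹) ^ 2) * B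
      ≤ 2 * Lmax ^ 2 * (1 + omg / M) / ((M : ℝ) * n) * A := by
    have hcoef : (0 : ℝ) ≤ 2 * ((M : ℝ) + omg) * ((M : ℝ)⁻¹) ^ 2 := by positivity
    calc (2 * ((M : ℝ) + omg) * ((M : ℝ)⁻¹) ^ 2) * B
        ≤ (2 * ((M : ℝ) + omg) * ((M : ℝ)⁻¹) ^ 2) * (Lmax ^ 2 * ((n : ℝ)⁻¹ * A)) :=
          mul_le_mul_of_nonneg_left hBb hcoef
      _ = 2 * Lmax ^ 2 * (1 + omg / M) / ((M : ℝ) * n) * A := by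
          field_simp
  have hCF : C ≤ 2 * Lmax * (M : ℝ) * F := by
    calc C ≤ (n : ℝ)⁻¹ * G2 := hCb
      _ ≤ (n : ℝ)⁻¹ * (2 * Lmax * ((M : ℝ) * n * F)) :=
          mul_le_mul_of_nonneg_left hG2b (by positivity)
      _ = 2 * Lmax * (M : ℝ) * F := by field_simp
  have hC2 : ((2 * (M : ℝ) + 4 * omg) * ((M : ℝ)⁻¹) ^ 2) * C
      ≤ 8 * Lmax * (1 + omg / M) * F := by
    have hcoef : (0 : ℝ) ≤ (2 * (M : ℝ) + 4 * omg) * ((M : ℝ)⁻¹) ^ 2 := by positivity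
    have h1 : ((2 * (M : ℝ) + 4 * omg) * ((M : ℝ)⁻¹) ^ 2) * C
        ≤ ((2 * (M : ℝ) + 4 * omg) * ((M : ℝ)⁻¹) ^ 2) * (2 * Lmax * (M : ℝ) * F) :=
      mul_le_mul_of_nonneg_left hCF hcoef
    have h2 : ((2 * (M : ℝ) + 4 * omg) * ((M : ℝ)⁻¹) ^ 2) * (2 * Lmax * (M : ℝ) * F)
        + 4 * (Lmax * F) = 8 * Lmax * (1 + omg / M) * F
        + (8 * omg / (M : ℝ) * (Lmax * F) - 8 * omg / (M : ℝ) * (Lmax * F)) := by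
      field_simp
      ring
    have homgM : 0 ≤ omg / (M : ℝ) := by positivity
    nlinarith
  linarith
end

section
/- Inner-product bound for DIANA-NASTYA: Suppose Q is a compression operator with parameter ω > 0, f is μ-strongly convex, each f_m^i is convex and L_max-smooth. Then in round t of DIANA-NASTYA, with h* = ∇f(x*), −E_Q[(1/M)Σ_{m=1}^M ⟨ĝ_{t,m} − h*, x_t − x*⟩] ≤ −(μ/4)‖x_t − x*‖² − (1/2)(f(x_t) − f(x*)) − (1/(Mn))Σ_{m=1}^M Σ_{i=0}^{n−1} D_{f_m^{π_m(i)}}(x*, x_{t,m}^i) + (L_max/(2Mn))Σ_{m=1}^M Σ_{i=0}^{n−1}‖x_t − x_{t,m}^i‖², where E_Q denotes expectation over the compression randomness at round t. -/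
open MeasureTheory ProbabilityTheory Finset

set_option linter.unusedSectionVars false

section Aux
variable {E : Type*} [NormedAddCommGroup E] [InnerProductSpace ℝ E] [CompleteSpace E]

lemma aux_line_hasDerivAt (φ : E → ℝ) (G : E → E) (hφ : ∀ x, HasGradientAt φ (G x) x)
    (a v : E) (t : ℝ) :
    HasDerivAt (fun s : ℝ => φ (a + s • v)) (inner ℝ (G (a + t • v)) v : ℝ) t := by
  have hc : HasDerivAt (fun s : ℝ => a + s • v) v t := by
    simpa using ((hasDerivAt_id t).smul_const v).const_add a
  have := (hφ (a + t • v)).hasFDerivAt.comp_hasDerivAt t hc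
  exact (by simpa [InnerProductSpace.toDual_apply_apply] using this : HasDerivAt (φ ∘ fun s : ℝ => a + s • v) (inner ℝ (G (a + t • v)) v) t)

lemma aux_descent (φ : E → ℝ) (G : E → E) (hφ : ∀ x, HasGradientAt φ (G x) x)
    (L : ℝ) (hL : ∀ x y, ‖G x - G y‖ ≤ L * ‖x - y‖) (a b : E) :
    φ b ≤ φ a + (inner ℝ (G a) (b - a) : ℝ) + L / 2 * ‖b - a‖ ^ 2 := by
  set v := b - a with hv
  have hGcont : Continuous G := by
    have : LipschitzWith (Real.toNNReal L) G := by
      refine LipschitzWith.of_dist_le_mul fun x y => ?_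
      rw [dist_eq_norm, dist_eq_norm]
      exact (hL x y).trans (by
        have : L ≤ (Real.toNNReal L : ℝ) := Real.le_coe_toNNReal L
        nlinarith [norm_nonneg (x - y)])
    exact this.continuous
  set ψ' : ℝ → ℝ := fun t => (inner ℝ (G (a + t • v)) v : ℝ) with hψ'
  have hψ'cont : Continuous ψ' := by
    apply Continuous.inner
    · exact hGcont.comp (by continuity)
    · exact continuous_const
  have hftc : ∫ t in (0:ℝ)..1, ψ' t = φ (a + (1:ℝ) • v) - φ (a + (0:ℝ) • v) := by
    exact intervalIntegral.integral_eq_sub_of_hasDerivAt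
      (fun t _ => aux_line_hasDerivAt φ G hφ a v t)
      (hψ'cont.intervalIntegrable 0 1)
  have hb : a + (1:ℝ) • v = b := by rw [hv]; module
  have ha0 : a + (0:ℝ) • v = a := by rw [hv]; module
  rw [hb, ha0] at hftc
  have hmono : ∫ t in (0:ℝ)..1, ψ' t ≤ ∫ t in (0:ℝ)..1, ((inner ℝ (G a) v : ℝ) + (L * ‖v‖ ^ 2) * t) := by
    apply intervalIntegral.integral_mono_on (by norm_num)
      (hψ'cont.intervalIntegrable 0 1)
      ((by continuity : Continuous fun t : ℝ => (inner ℝ (G a) v : ℝ) + (L * ‖v‖ ^ 2) * t).intervalIntegrable 0 1)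
    intro t ht
    have h1 : ψ' t - (inner ℝ (G a) v : ℝ) = (inner ℝ (G (a + t • v) - G a) v : ℝ) := by
      rw [inner_sub_left]
    have h2 : (inner ℝ (G (a + t • v) - G a) v : ℝ) ≤ L * ‖v‖ ^ 2 * t := by
      calc (inner ℝ (G (a + t • v) - G a) v : ℝ) ≤ ‖G (a + t • v) - G a‖ * ‖v‖ :=
            real_inner_le_norm _ _
        _ ≤ (L * ‖(a + t • v) - a‖) * ‖v‖ := by
            have := hL (a + t • v) a
            nlinarith [norm_nonneg v]
        _ = L * ‖v‖ ^ 2 * t := by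
            rw [add_sub_cancel_left, norm_smul, Real.norm_eq_abs, abs_of_nonneg ht.1]
            ring
    linarith
  have hint : ∫ t in (0:ℝ)..1, ((inner ℝ (G a) v : ℝ) + (L * ‖v‖ ^ 2) * t)
      = (inner ℝ (G a) v : ℝ) + L * ‖v‖ ^ 2 / 2 := by
    rw [intervalIntegral.integral_add (intervalIntegrable_const)
      (((by fun_prop : Continuous fun t : ℝ => (L * ‖v‖ ^ 2) * t)).intervalIntegrable 0 1)]
    rw [intervalIntegral.integral_const_mul, integral_id]
    simp; ring
  rw [hftc, hint] at hmono
  have : φ b - φ a ≤ (inner ℝ (G a) v : ℝ) + L * ‖v‖ ^ 2 / 2 := hmono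
  linarith

lemma aux_qg (f : E → ℝ) (μ : ℝ) (hsc : StrongConvexOn Set.univ μ f)
    (xs x : E) (hmin : ∀ y, f xs ≤ f y) :
    μ / 2 * ‖x - xs‖ ^ 2 ≤ f x - f xs := by
  have key : ∀ a : ℝ, a ∈ Set.Ioo (0:ℝ) 1 → (1 - a) * (μ / 2 * ‖x - xs‖ ^ 2) ≤ f x - f xs := by
    intro a ha
    have h1 := hsc.2 (Set.mem_univ x) (Set.mem_univ xs) (le_of_lt ha.1)
      (by linarith [ha.2] : (0:ℝ) ≤ 1 - a) (by ring)
    have h2 := hmin (a • x + (1 - a) • xs)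
    have h3 : a * ((1 - a) * (μ / 2 * ‖x - xs‖ ^ 2)) ≤ a * (f x - f xs) := by
      simp only [smul_eq_mul] at h1
      nlinarith
    exact le_of_mul_le_mul_left h3 ha.1
  have htend : Filter.Tendsto (fun a : ℝ => (1 - a) * (μ / 2 * ‖x - xs‖ ^ 2)) (nhdsWithin 0 (Set.Ioi 0))
      (nhds ((1 - 0) * (μ / 2 * ‖x - xs‖ ^ 2))) := by
    apply Filter.Tendsto.mono_left _ nhdsWithin_le_nhds
    exact (Filter.Tendsto.const_sub _ (fun _ => id) |>.mul tendsto_const_nhds)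
  have hev : ∀ᶠ a in nhdsWithin (0:ℝ) (Set.Ioi 0), (1 - a) * (μ / 2 * ‖x - xs‖ ^ 2) ≤ f x - f xs := by
    filter_upwards [Ioo_mem_nhdsGT_of_mem (by norm_num : (0:ℝ) ∈ Set.Ico (0:ℝ) 1)] with a ha
    exact key a ha
  have := le_of_tendsto htend hev
  simpa using this

lemma aux_key (φ : E → ℝ) (G : E → E) (hφ : ∀ x, HasGradientAt φ (G x) x)
    (L : ℝ) (hL : ∀ x y, ‖G x - G y‖ ≤ L * ‖x - y‖) (xs xt yi : E) :
    φ xt - φ xs + (φ xs - φ yi - (inner ℝ (G yi) (xs - yi) : ℝ)) - L / 2 * ‖xt - yi‖ ^ 2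
      ≤ (inner ℝ (G yi) (xt - xs) : ℝ) := by
  have hd := aux_descent φ G hφ L hL yi xt
  have hsplit : (inner ℝ (G yi) (xt - xs) : ℝ)
      = (inner ℝ (G yi) (xt - yi) : ℝ) - (inner ℝ (G yi) (xs - yi) : ℝ) := by
    rw [← inner_sub_right]
    congr 1
    abel
  linarith

end Aux

/-- **inner-product bound for DIANA-NASTYA.**
Here `h m = h_{t,m}` are the (fixed) shifts, `q m` is the compressor output
`Q(g_{t,m} − h_{t,m})`, `ĝ_{t,m} = h_{t,m} + q m` and `h* = ∇f(x*)`.  -/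
theorem diana_nastya_inner_product_bound
    {d M n : ℕ} (hM : 0 < M) (hn : 0 < n)
    (f : Fin M → Fin n → EuclideanSpace ℝ (Fin d) → ℝ)
    (g : Fin M → Fin n → EuclideanSpace ℝ (Fin d) → EuclideanSpace ℝ (Fin d))
    (hgrad : ∀ m i x, HasGradientAt (f m i) (g m i x) x)
    (hconv : ∀ m i, ConvexOn ℝ Set.univ (f m i))
    (Lmax : ℝ)
    (hsmooth : ∀ m i x y, ‖g m i x - g m i y‖ ≤ Lmax * ‖x - y‖)
    (omg : ℝ) (homg : 0 < omg)
    -- f = (1/(Mn)) Σ_m Σ_j f_m^j is μ-strongly convex with unique minimizer x*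
    (μ : ℝ) (hμ : 0 < μ)
    (fbar : EuclideanSpace ℝ (Fin d) → ℝ)
    (hfbar : fbar = fun x => ((M : ℝ) * n)⁻¹ * ∑ m, ∑ j, f m j x)
    (hsc : StrongConvexOn Set.univ μ fbar)
    (xstar : EuclideanSpace ℝ (Fin d))
    (hmin : ∀ y, fbar xstar ≤ fbar y)
    (huniq : ∀ y, (∀ z, fbar y ≤ fbar z) → y = xstar)
    -- round t : current point `xt`, fixed permutations `π`, deterministic local steps
    (γ : ℝ) (hγ : 0 < γ)
    (xt : EuclideanSpace ℝ (Fin d)) (π : Fin M → Equiv.Perm (Fin n))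
    (y : Fin M → ℕ → EuclideanSpace ℝ (Fin d))
    (hy0 : ∀ m, y m 0 = xt)
    (hystep : ∀ m (i : Fin n), y m ((i : ℕ) + 1) = y m i - γ • g m (π m i) (y m i))
    -- fresh, independent compression randomness of the M workers at round t
    {Ω : Type*} [MeasurableSpace Ω] (P : Measure Ω) [IsProbabilityMeasure P]
    (q : Fin M → Ω → EuclideanSpace ℝ (Fin d))
    (hqmem : ∀ m, MemLp (q m) 2 P)
    (hqindep : iIndepFun
      (m := fun _ : Fin M => (inferInstance : MeasurableSpace (EuclideanSpace ℝ (Fin d)))) q P)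
    (h : Fin M → EuclideanSpace ℝ (Fin d))
    (hstar : EuclideanSpace ℝ (Fin d))
    (hhstar : hstar = ((M : ℝ) * n)⁻¹ • ∑ m, ∑ j, g m j xstar)
    -- `q m` is the compressor output `Q(g_{t,m} − h_{t,m})` (unbiased, relative variance `omg`)
    (hqmean : ∀ m, ∫ w, q m w ∂P = ((γ * n)⁻¹ : ℝ) • (xt - y m n) - h m)
    (hqvar : ∀ m, ∫ w, ‖q m w - (((γ * n)⁻¹ : ℝ) • (xt - y m n) - h m)‖ ^ 2 ∂P ≤ omg * ‖((γ * n)⁻¹ : ℝ) • (xt - y m n) - h m‖ ^ 2)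
    :
    -(∫ w, (M : ℝ)⁻¹ * ∑ m, (inner ℝ ((h m + q m w) - hstar) (xt - xstar) : ℝ) ∂P)
      ≤ -(μ / 4) * ‖xt - xstar‖ ^ 2 - (1 / 2) * (fbar xt - fbar xstar)
        - ((M : ℝ) * n)⁻¹ *
            ∑ m, ∑ i : Fin n, breg (f m (π m i)) (g m (π m i)) xstar (y m (i : ℕ))
        + Lmax / (2 * M * n) * ∑ m, ∑ i : Fin n, ‖xt - y m (i : ℕ)‖ ^ 2 := by
  have hMr : (0:ℝ) < (M:ℝ) := by exact_mod_cast hM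
  have hnr : (0:ℝ) < (n:ℝ) := by exact_mod_cast hn
  -- integrability
  have hq_int : ∀ m, Integrable (q m) P := fun m => (hqmem m).integrable one_le_two
  -- integral of the vector integrand
  have hintX : ∀ m, ∫ w, ((h m + q m w) - hstar) ∂P
      = ((γ * (n:ℝ))⁻¹) • (xt - y m n) - hstar := by
    intro m
    have heq : (fun w => (h m + q m w) - hstar) = fun w => q m w + (h m - hstar) := by
      funext w; abel
    rw [heq, integral_add (hq_int m) (integrable_const _), integral_const, hqmean m]
    simp [measure_univ]
  -- scalar integrand : integrability and value
  have hterm : ∀ m, Integrable (fun w => (inner ℝ ((h m + q m w) - hstar) (xt - xstar) : ℝ)) P ∧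
      ∫ w, (inner ℝ ((h m + q m w) - hstar) (xt - xstar) : ℝ) ∂P
        = (inner ℝ (((γ * (n:ℝ))⁻¹) • (xt - y m n) - hstar) (xt - xstar) : ℝ) := by
    intro m
    have hX : Integrable (fun w => (h m + q m w) - hstar) P :=
      ((integrable_const (h m)).add (hq_int m)).sub (integrable_const hstar)
    constructor
    · have := ContinuousLinearMap.integrable_comp (innerSL ℝ (xt - xstar)) hX
      apply this.congr
      filter_upwards with w
      rw [innerSL_apply_apply]
      exact real_inner_comm _ _
    · calc ∫ w, (inner ℝ ((h m + q m w) - hstar) (xt - xstar) : ℝ) ∂P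
          = ∫ w, (inner ℝ (xt - xstar) ((h m + q m w) - hstar) : ℝ) ∂P := by
            congr 1; funext w; exact real_inner_comm _ _
        _ = (inner ℝ (xt - xstar) (∫ w, ((h m + q m w) - hstar) ∂P) : ℝ) := integral_inner hX (xt - xstar)
        _ = (inner ℝ (((γ * (n:ℝ))⁻¹) • (xt - y m n) - hstar) (xt - xstar) : ℝ) := by
            rw [hintX m]; exact real_inner_comm _ _
  have hIcalc : ∫ w, (M : ℝ)⁻¹ * ∑ m, (inner ℝ ((h m + q m w) - hstar) (xt - xstar) : ℝ) ∂P
      = (M : ℝ)⁻¹ * ∑ m, (inner ℝ (((γ * (n:ℝ))⁻¹) • (xt - y m n) - hstar) (xt - xstar) : ℝ) := by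
    rw [integral_const_mul]
    congr 1
    rw [integral_finset_sum _ (fun m _ => (hterm m).1)]
    exact Finset.sum_congr rfl (fun m _ => (hterm m).2)
  -- hstar = 0
  have hstar0 : hstar = 0 := by
    have hsum : HasFDerivAt (fun x => ∑ m, ∑ j, f m j x)
        (∑ m, ∑ j, (InnerProductSpace.toDual ℝ (EuclideanSpace ℝ (Fin d)) (g m j xstar)
          : EuclideanSpace ℝ (Fin d) →L[ℝ] ℝ)) xstar := by
      apply HasFDerivAt.fun_sum
      intro m _
      apply HasFDerivAt.fun_sum
      intro j _
      exact (hgrad m j xstar).hasFDerivAt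
    have hmul := hsum.const_mul (((M : ℝ) * n)⁻¹)
    have hgf : HasGradientAt fbar hstar xstar := by
      rw [hasGradientAt_iff_hasFDerivAt, hfbar, hhstar]
      convert hmul using 1
      · rfl
      rw [_root_.map_smul]
      congr 1
      rw [map_sum]
      exact Finset.sum_congr rfl fun m _ => map_sum _ _ _
    have hloc : IsLocalMin fbar xstar := Filter.Eventually.of_forall hmin
    have h0 := hloc.hasFDerivAt_eq_zero hgf.hasFDerivAt
    have := (InnerProductSpace.toDual ℝ (EuclideanSpace ℝ (Fin d))).injective
      (by rw [h0, map_zero] :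
        InnerProductSpace.toDual ℝ (EuclideanSpace ℝ (Fin d)) hstar
          = InnerProductSpace.toDual ℝ (EuclideanSpace ℝ (Fin d)) 0)
    exact this
  -- telescoping
  have htel : ∀ m, xt - y m n = γ • ∑ i : Fin n, g m (π m i) (y m (i : ℕ)) := by
    intro m
    rw [Finset.smul_sum]
    have h1 : ∀ i : Fin n, γ • g m (π m i) (y m (i : ℕ)) = y m (i : ℕ) - y m ((i : ℕ) + 1) := by
      intro i
      rw [hystep m i]
      abel
    rw [Finset.sum_congr rfl (fun i _ => h1 i),
      Fin.sum_univ_eq_sum_range (fun i => y m i - y m (i + 1)) n,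
      Finset.sum_range_sub' (y m) n, hy0]
  have hGm : ∀ m, ((γ * (n:ℝ))⁻¹) • (xt - y m n)
      = ((n:ℝ))⁻¹ • ∑ i : Fin n, g m (π m i) (y m (i : ℕ)) := by
    intro m
    rw [htel m, smul_smul]
    congr 1
    field_simp
  -- per-term key bound
  have hkey : ∀ (m : Fin M) (i : Fin n),
      f m (π m i) xt - f m (π m i) xstar
        + breg (f m (π m i)) (g m (π m i)) xstar (y m (i : ℕ))
        - Lmax / 2 * ‖xt - y m (i : ℕ)‖ ^ 2
      ≤ (inner ℝ (g m (π m i) (y m (i : ℕ))) (xt - xstar) : ℝ) := by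
    intro m i
    simp only [breg]
    exact aux_key (f m (π m i)) (g m (π m i)) (hgrad m (π m i)) Lmax
      (hsmooth m (π m i)) xstar xt (y m (i : ℕ))
  set T := ∑ m, ∑ i : Fin n, (inner ℝ (g m (π m i) (y m (i : ℕ))) (xt - xstar) : ℝ) with hTdef
  set B := ∑ m, ∑ i : Fin n, breg (f m (π m i)) (g m (π m i)) xstar (y m (i : ℕ)) with hBdef
  set N := ∑ m, ∑ i : Fin n, ‖xt - y m (i : ℕ)‖ ^ 2 with hNdef
  -- value of the integral
  have hval : ∫ w, (M : ℝ)⁻¹ * ∑ m, (inner ℝ ((h m + q m w) - hstar) (xt - xstar) : ℝ) ∂P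
      = ((M : ℝ) * n)⁻¹ * T := by
    rw [hIcalc]
    have hm' : ∀ m : Fin M, (inner ℝ (((γ * (n:ℝ))⁻¹) • (xt - y m n) - hstar) (xt - xstar) : ℝ)
        = (n:ℝ)⁻¹ * ∑ i : Fin n, (inner ℝ (g m (π m i) (y m (i : ℕ))) (xt - xstar) : ℝ) := by
      intro m
      rw [hstar0, sub_zero, hGm m, real_inner_smul_left, sum_inner]
    rw [Finset.sum_congr rfl fun m _ => hm' m, ← Finset.mul_sum, hTdef, mul_inv]
    ring
  -- bound on T
  have hsum_le : ∑ m, ∑ i : Fin n,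
      (f m (π m i) xt - f m (π m i) xstar
        + breg (f m (π m i)) (g m (π m i)) xstar (y m (i : ℕ))
        - Lmax / 2 * ‖xt - y m (i : ℕ)‖ ^ 2) ≤ T :=
    Finset.sum_le_sum fun m _ => Finset.sum_le_sum fun i _ => hkey m i
  have hsum_eq : ∑ m, ∑ i : Fin n,
      (f m (π m i) xt - f m (π m i) xstar
        + breg (f m (π m i)) (g m (π m i)) xstar (y m (i : ℕ))
        - Lmax / 2 * ‖xt - y m (i : ℕ)‖ ^ 2)
      = ((∑ m, ∑ j, f m j xt) - (∑ m, ∑ j, f m j xstar)) + B - Lmax / 2 * N := by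
    have hper : ∀ m : Fin M, ∑ i : Fin n, (f m (π m i) xt - f m (π m i) xstar)
        = ∑ j, (f m j xt - f m j xstar) :=
      fun m => Equiv.sum_comp (π m) (fun j => f m j xt - f m j xstar)
    calc ∑ m, ∑ i : Fin n,
        (f m (π m i) xt - f m (π m i) xstar
          + breg (f m (π m i)) (g m (π m i)) xstar (y m (i : ℕ))
          - Lmax / 2 * ‖xt - y m (i : ℕ)‖ ^ 2)
        = ∑ m, ((∑ i : Fin n, (f m (π m i) xt - f m (π m i) xstar))
            + (∑ i : Fin n, breg (f m (π m i)) (g m (π m i)) xstar (y m (i : ℕ)))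
            - Lmax / 2 * ∑ i : Fin n, ‖xt - y m (i : ℕ)‖ ^ 2) := by
          refine Finset.sum_congr rfl fun m _ => ?_
          rw [Finset.sum_sub_distrib, Finset.sum_add_distrib, Finset.mul_sum]
      _ = ((∑ m, ∑ j, f m j xt) - (∑ m, ∑ j, f m j xstar)) + B - Lmax / 2 * N := by
          rw [Finset.mul_sum, ← Finset.sum_sub_distrib, ← Finset.sum_add_distrib,
            ← Finset.sum_sub_distrib]
          refine Finset.sum_congr rfl fun m _ => ?_
          rw [hper m, Finset.sum_sub_distrib]
  have hMN : (0:ℝ) < (M:ℝ) * n := mul_pos hMr hnr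
  have hT_ge : ((∑ m, ∑ j, f m j xt) - (∑ m, ∑ j, f m j xstar)) + B - Lmax / 2 * N ≤ T := by
    rw [← hsum_eq]; exact hsum_le
  have hfd : ((M:ℝ) * n)⁻¹ * ((∑ m, ∑ j, f m j xt) - (∑ m, ∑ j, f m j xstar))
      = fbar xt - fbar xstar := by
    rw [hfbar]; ring
  have hqg : μ / 2 * ‖xt - xstar‖ ^ 2 ≤ fbar xt - fbar xstar := aux_qg fbar μ hsc xstar xt hmin
  have e2 : ((M:ℝ) * n)⁻¹ * (Lmax / 2) = Lmax / (2 * (M:ℝ) * (n:ℝ)) := by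
    rw [div_eq_mul_inv Lmax (2 * (M:ℝ) * (n:ℝ)), div_eq_mul_inv Lmax 2, mul_inv, mul_inv, mul_inv]
    ring
  calc -(∫ w, (M : ℝ)⁻¹ * ∑ m, (inner ℝ ((h m + q m w) - hstar) (xt - xstar) : ℝ) ∂P)
      = -(((M : ℝ) * n)⁻¹ * T) := by rw [hval]
    _ ≤ -(((M : ℝ) * n)⁻¹ * (((∑ m, ∑ j, f m j xt) - (∑ m, ∑ j, f m j xstar)) + B - Lmax / 2 * N)) := by
        apply neg_le_neg
        exact mul_le_mul_of_nonneg_left hT_ge (le_of_lt (inv_pos.2 hMN))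
    _ = -((fbar xt - fbar xstar) + ((M:ℝ) * n)⁻¹ * B - Lmax / (2 * (M:ℝ) * (n:ℝ)) * N) := by
        rw [← hfd, ← e2]; ring
    _ ≤ -(μ / 4) * ‖xt - xstar‖ ^ 2 - (1 / 2) * (fbar xt - fbar xstar)
        - ((M : ℝ) * n)⁻¹ * B + Lmax / (2 * M * n) * N := by
        linarith
end
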